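/- arXiv:2008.09265 — 7 statements merged into one kernel-verified Lean document; each statement's English description precedes it below -/
import Mathlib

section
/- Let G be a disjoint union of n vertex-disjoint triangles, and let k be the minimum positive integer with C(k,3) ≥ n. Then the sum index of G equals k. -/
open SimpleGraph Function

def edgePlus {V : Type*} (f : V → ℤ) : Sym2 V → ℤ :=
  Sym2.lift ⟨fun u v => f u + f v, fun u v => by ring⟩

def edgeMinus {V : Type*} (f : V → ℤ) : Sym2 V → ℤ :=
  Sym2.lift ⟨fun u v => |f u - f v|, fun u v => abs_sub_comm _ _⟩

/-- The sum index: the minimum, over injective vertex labelings `f : V → ℤ`,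
of the number of distinct values of `f⁺(uv) = f u + f v` on the edges. -/
noncomputable def sumIndex {V : Type*} (G : SimpleGraph V) : ℕ :=
  sInf {k | ∃ f : V → ℤ, Function.Injective f ∧ (edgePlus f '' G.edgeSet).ncard = k}

/-- The difference index: the minimum, over injective vertex labelings `f : V → ℤ`,
of the number of distinct values of `f⁻(uv) = |f u − f v|` on the edges. -/
noncomputable def diffIndex {V : Type*} (G : SimpleGraph V) : ℕ :=
  sInf {k | ∃ f : V → ℤ, Function.Injective f ∧ (edgeMinus f '' G.edgeSet).ncard = k}

/-- A disjoint union of `n` triangles: vertices `Fin n × Fin 3`, two distinct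
vertices adjacent iff they lie in the same triangle. -/
def disjointTriangles (n : ℕ) : SimpleGraph (Fin n × Fin 3) :=
  SimpleGraph.fromRel (fun p q => p.1 = q.1)

lemma dt_adj {n : ℕ} {p q : Fin n × Fin 3} :
    (disjointTriangles n).Adj p q ↔ p ≠ q ∧ p.1 = q.1 := by
  simp only [disjointTriangles, fromRel_adj]
  constructor
  · rintro ⟨h, h2 | h2⟩ <;> exact ⟨h, by omega⟩
  · rintro ⟨h, h2⟩; exact ⟨h, Or.inl h2⟩

lemma edgePlus_mk {V : Type*} (f : V → ℤ) (x y : V) :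
    edgePlus f s(x, y) = f x + f y := rfl

lemma four_le {a b : ℕ} (h : (4:ℕ)^a < 4^(b+1)) : a ≤ b := by
  have := (Nat.pow_lt_pow_iff_right (by norm_num : 1 < 4)).mp h; omega

lemma pow_pair {a b d e : ℕ} (hab : a ≤ b) (hde : d ≤ e)
    (h : (4:ℕ)^a + 4^b = 4^d + 4^e) : a = d ∧ b = e := by
  have h1 : (4:ℕ)^a ≤ 4^b := Nat.pow_le_pow_right (by norm_num) hab
  have h2 : (4:ℕ)^d ≤ 4^e := Nat.pow_le_pow_right (by norm_num) hde
  have p1 : (0:ℕ) < 4^e := Nat.pow_pos (by norm_num)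
  have p2 : (0:ℕ) < 4^b := Nat.pow_pos (by norm_num)
  have l1 : (4:ℕ)^b < 4^(e+1) := by
    rw [pow_succ]
    generalize (4:ℕ)^a = A at *; generalize (4:ℕ)^b = B at *
    generalize (4:ℕ)^d = D at *; generalize (4:ℕ)^e = E at *; omega
  have l2 : (4:ℕ)^e < 4^(b+1) := by
    rw [pow_succ]
    generalize (4:ℕ)^a = A at *; generalize (4:ℕ)^b = B at *
    generalize (4:ℕ)^d = D at *; generalize (4:ℕ)^e = E at *; omega
  have hbe : b = e := by have := four_le l1; have := four_le l2; omega
  subst hbe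
  have hae : a = d := by
    have : (4:ℕ)^a = 4^d := by omega
    exact Nat.pow_right_injective (by norm_num) this
  exact ⟨hae, rfl⟩

lemma pow_triple {a b c d e f : ℕ} (h1 : a ≤ b) (h2 : b ≤ c) (h3 : d ≤ e) (h4 : e ≤ f)
    (h : (4:ℕ)^a + 4^b + 4^c = 4^d + 4^e + 4^f) : a = d ∧ b = e ∧ c = f := by
  have m1 : (4:ℕ)^a ≤ 4^c := Nat.pow_le_pow_right (by norm_num) (h1.trans h2)
  have m2 : (4:ℕ)^b ≤ 4^c := Nat.pow_le_pow_right (by norm_num) h2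
  have m3 : (4:ℕ)^d ≤ 4^f := Nat.pow_le_pow_right (by norm_num) (h3.trans h4)
  have m4 : (4:ℕ)^e ≤ 4^f := Nat.pow_le_pow_right (by norm_num) h4
  have p1 : (0:ℕ) < 4^f := Nat.pow_pos (by norm_num)
  have p2 : (0:ℕ) < 4^c := Nat.pow_pos (by norm_num)
  have l1 : (4:ℕ)^c < 4^(f+1) := by
    rw [pow_succ]
    generalize (4:ℕ)^a = A at *; generalize (4:ℕ)^b = B at *
    generalize (4:ℕ)^c = C at *; generalize (4:ℕ)^d = D at *
    generalize (4:ℕ)^e = E at *; generalize (4:ℕ)^f = F at *; omega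
  have l2 : (4:ℕ)^f < 4^(c+1) := by
    rw [pow_succ]
    generalize (4:ℕ)^a = A at *; generalize (4:ℕ)^b = B at *
    generalize (4:ℕ)^c = C at *; generalize (4:ℕ)^d = D at *
    generalize (4:ℕ)^e = E at *; generalize (4:ℕ)^f = F at *; omega
  have hcf : c = f := by have := four_le l1; have := four_le l2; omega
  subst hcf
  have := pow_pair h1 h3 (by omega)
  exact ⟨this.1, this.2, rfl⟩

lemma sort3 (a b c : ℕ) : ∃ a' b' c', a' ≤ b' ∧ b' ≤ c' ∧
    ({a, b, c} : Multiset ℕ) = {a', b', c'} ∧ (4:ℕ)^a + 4^b + 4^c = 4^a' + 4^b' + 4^c' := by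
  rcases le_total a b with h1 | h1 <;> rcases le_total b c with h2 | h2 <;>
    rcases le_total a c with h3 | h3
  · exact ⟨a, b, c, h1, h2, rfl, rfl⟩
  · exact ⟨a, b, c, h1, h2, rfl, rfl⟩
  · exact ⟨a, c, b, h3, h2, by
      simp only [Multiset.insert_eq_cons, ← Multiset.cons_zero]; rw [Multiset.cons_swap b c], by ring⟩
  · exact ⟨c, a, b, h3, h1, by
      simp only [Multiset.insert_eq_cons, ← Multiset.cons_zero]
      rw [Multiset.cons_swap b c, Multiset.cons_swap a c], by ring⟩
  · exact ⟨b, a, c, h1, h3, by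
      simp only [Multiset.insert_eq_cons, ← Multiset.cons_zero]; rw [Multiset.cons_swap a b], by ring⟩
  · exact ⟨b, c, a, h2, h3, by
      simp only [Multiset.insert_eq_cons, ← Multiset.cons_zero]
      rw [Multiset.cons_swap a b, Multiset.cons_swap a c], by ring⟩
  · exact ⟨c, b, a, h2, h1, by
      simp only [Multiset.insert_eq_cons, ← Multiset.cons_zero]
      rw [Multiset.cons_swap a b, Multiset.cons_swap a c, Multiset.cons_swap b c], by ring⟩
  · exact ⟨c, b, a, h2, h1, by
      simp only [Multiset.insert_eq_cons, ← Multiset.cons_zero]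
      rw [Multiset.cons_swap a b, Multiset.cons_swap a c, Multiset.cons_swap b c], by ring⟩

lemma pow_triple_multiset {a b c d e f : ℕ}
    (h : (4:ℕ)^a + 4^b + 4^c = 4^d + 4^e + 4^f) :
    ({a, b, c} : Multiset ℕ) = {d, e, f} := by
  obtain ⟨a', b', c', o1, o2, hm1, he1⟩ := sort3 a b c
  obtain ⟨d', e', f', o3, o4, hm2, he2⟩ := sort3 d e f
  obtain ⟨q1, q2, q3⟩ := pow_triple o1 o2 o3 o4 (by omega)
  rw [hm1, hm2, q1, q2, q3]

lemma pack (n k : ℕ) (hkn : n ≤ k.choose 3) :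
    ∃ c : Fin n → Fin 3 → ℕ,
      (∀ i, c i 0 < c i 1 ∧ c i 1 < c i 2) ∧
      (∀ i j, c i j < k) ∧
      (∀ i i' : Fin n, c i 0 = c i' 0 → c i 1 = c i' 1 → c i 2 = c i' 2 → i = i') := by
  have hcard : Fintype.card (Fin n) ≤ Fintype.card {s : Finset (Fin k) // s.card = 3} := by
    rw [Fintype.card_fin, Fintype.card_subtype]
    have heq : (Finset.univ.filter (fun s : Finset (Fin k) => s.card = 3)) =
        Finset.univ.powersetCard 3 := by
      ext s; simp [Finset.mem_powersetCard]
    rw [heq, Finset.card_powersetCard, Finset.card_univ, Fintype.card_fin]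
    exact hkn
  obtain ⟨T⟩ := Function.Embedding.nonempty_of_card_le hcard
  refine ⟨fun i j => (((T i).1.orderIsoOfFin (T i).2 j : Fin k) : ℕ), ?_, ?_, ?_⟩
  · intro i
    constructor
    · exact ((T i).1.orderIsoOfFin (T i).2).lt_iff_lt.mpr (by decide)
    · exact ((T i).1.orderIsoOfFin (T i).2).lt_iff_lt.mpr (by decide)
  · intro i j; exact ((T i).1.orderIsoOfFin (T i).2 j : Fin k).isLt
  · intro i i' h0 h1 h2
    have sub : ∀ a a' : Fin n,
        (∀ j : Fin 3, (((T a).1.orderIsoOfFin (T a).2 j : Fin k) : ℕ) =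
          (((T a').1.orderIsoOfFin (T a').2 j : Fin k) : ℕ)) → (T a).1 ⊆ (T a').1 := by
      intro a a' h x hx
      obtain ⟨j, hj⟩ : ∃ j, ((T a).1.orderIsoOfFin (T a).2 j : Fin k) = x :=
        ⟨((T a).1.orderIsoOfFin (T a).2).symm ⟨x, hx⟩, by simp⟩
      have hv : ((T a').1.orderIsoOfFin (T a').2 j : Fin k) = x := by
        apply Fin.val_injective
        rw [← hj]
        exact (h j).symm
      rw [← hv]
      exact ((T a').1.orderIsoOfFin (T a').2 j).2
    have hall : ∀ j : Fin 3, (((T i).1.orderIsoOfFin (T i).2 j : Fin k) : ℕ) =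
        (((T i').1.orderIsoOfFin (T i').2 j : Fin k) : ℕ) := by
      intro j; fin_cases j
      · exact h0
      · exact h1
      · exact h2
    exact T.injective (Subtype.ext (Finset.Subset.antisymm (sub i i' hall)
      (sub i' i (fun j => (hall j).symm))))

lemma upper (n k : ℕ) (hkn : n ≤ k.choose 3) :
    ∃ f : Fin n × Fin 3 → ℤ, Function.Injective f ∧
      (edgePlus f '' (disjointTriangles n).edgeSet).ncard ≤ k := by
  obtain ⟨c, cmono, hck, key⟩ := pack n k hkn
  refine ⟨fun p => (4:ℤ)^(c p.1 0) + 4^(c p.1 1) + 4^(c p.1 2) - 2*4^(c p.1 p.2), ?_, ?_⟩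
  · rintro ⟨i, v⟩ ⟨i', v'⟩ h
    simp only at h
    have mo1 := (cmono i).1; have mo2 := (cmono i).2
    have mo3 := (cmono i').1; have mo4 := (cmono i').2
    have fe0 : ∀ (hh : 0 < 3), (⟨0, hh⟩ : Fin 3) = 0 := fun _ => rfl
    have fe1 : ∀ (hh : 1 < 3), (⟨1, hh⟩ : Fin 3) = 1 := fun _ => rfl
    have fe2 : ∀ (hh : 2 < 3), (⟨2, hh⟩ : Fin 3) = 2 := fun _ => rfl
    fin_cases v <;> fin_cases v' <;> simp only [fe0, fe1, fe2] at h ⊢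
    · have hZ : (4:ℤ)^(c i 1) + 4^(c i 2) + 4^(c i' 0) = 4^(c i' 1) + 4^(c i' 2) + 4^(c i 0) := by linarith
      have hN : (4:ℕ)^(c i 1) + 4^(c i 2) + 4^(c i' 0) = 4^(c i' 1) + 4^(c i' 2) + 4^(c i 0) := by exact_mod_cast hZ
      have hM := pow_triple_multiset hN
      have hx : ∀ t : ℕ, t ∈ ({c i 1, c i 2, c i' 0} : Multiset ℕ) ↔ t ∈ ({c i' 1, c i' 2, c i 0} : Multiset ℕ) :=
        fun t => by rw [hM]
      simp only [Multiset.insert_eq_cons, Multiset.mem_cons, Multiset.mem_singleton] at hx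
      have e1 := hx (c i 1); have e2 := hx (c i 2); have e3 := hx (c i' 0)
      have e4 := hx (c i' 1); have e5 := hx (c i' 2); have e6 := hx (c i 0)
      first
      | (exfalso; omega)
      | (simp only [Prod.mk.injEq]
         exact ⟨key i i' (by omega) (by omega) (by omega), by decide⟩)
    · have hZ : (4:ℤ)^(c i 1) + 4^(c i 2) + 4^(c i' 1) = 4^(c i' 0) + 4^(c i' 2) + 4^(c i 0) := by linarith
      have hN : (4:ℕ)^(c i 1) + 4^(c i 2) + 4^(c i' 1) = 4^(c i' 0) + 4^(c i' 2) + 4^(c i 0) := by exact_mod_cast hZ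
      have hM := pow_triple_multiset hN
      have hx : ∀ t : ℕ, t ∈ ({c i 1, c i 2, c i' 1} : Multiset ℕ) ↔ t ∈ ({c i' 0, c i' 2, c i 0} : Multiset ℕ) :=
        fun t => by rw [hM]
      simp only [Multiset.insert_eq_cons, Multiset.mem_cons, Multiset.mem_singleton] at hx
      have e1 := hx (c i 1); have e2 := hx (c i 2); have e3 := hx (c i' 1)
      have e4 := hx (c i' 0); have e5 := hx (c i' 2); have e6 := hx (c i 0)
      first
      | (exfalso; omega)
      | (simp only [Prod.mk.injEq]
         exact ⟨key i i' (by omega) (by omega) (by omega), by decide⟩)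
    · have hZ : (4:ℤ)^(c i 1) + 4^(c i 2) + 4^(c i' 2) = 4^(c i' 0) + 4^(c i' 1) + 4^(c i 0) := by linarith
      have hN : (4:ℕ)^(c i 1) + 4^(c i 2) + 4^(c i' 2) = 4^(c i' 0) + 4^(c i' 1) + 4^(c i 0) := by exact_mod_cast hZ
      have hM := pow_triple_multiset hN
      have hx : ∀ t : ℕ, t ∈ ({c i 1, c i 2, c i' 2} : Multiset ℕ) ↔ t ∈ ({c i' 0, c i' 1, c i 0} : Multiset ℕ) :=
        fun t => by rw [hM]
      simp only [Multiset.insert_eq_cons, Multiset.mem_cons, Multiset.mem_singleton] at hx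
      have e1 := hx (c i 1); have e2 := hx (c i 2); have e3 := hx (c i' 2)
      have e4 := hx (c i' 0); have e5 := hx (c i' 1); have e6 := hx (c i 0)
      first
      | (exfalso; omega)
      | (simp only [Prod.mk.injEq]
         exact ⟨key i i' (by omega) (by omega) (by omega), by decide⟩)
    · have hZ : (4:ℤ)^(c i 0) + 4^(c i 2) + 4^(c i' 0) = 4^(c i' 1) + 4^(c i' 2) + 4^(c i 1) := by linarith
      have hN : (4:ℕ)^(c i 0) + 4^(c i 2) + 4^(c i' 0) = 4^(c i' 1) + 4^(c i' 2) + 4^(c i 1) := by exact_mod_cast hZ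
      have hM := pow_triple_multiset hN
      have hx : ∀ t : ℕ, t ∈ ({c i 0, c i 2, c i' 0} : Multiset ℕ) ↔ t ∈ ({c i' 1, c i' 2, c i 1} : Multiset ℕ) :=
        fun t => by rw [hM]
      simp only [Multiset.insert_eq_cons, Multiset.mem_cons, Multiset.mem_singleton] at hx
      have e1 := hx (c i 0); have e2 := hx (c i 2); have e3 := hx (c i' 0)
      have e4 := hx (c i' 1); have e5 := hx (c i' 2); have e6 := hx (c i 1)
      first
      | (exfalso; omega)
      | (simp only [Prod.mk.injEq]
         exact ⟨key i i' (by omega) (by omega) (by omega), by decide⟩)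
    · have hZ : (4:ℤ)^(c i 0) + 4^(c i 2) + 4^(c i' 1) = 4^(c i' 0) + 4^(c i' 2) + 4^(c i 1) := by linarith
      have hN : (4:ℕ)^(c i 0) + 4^(c i 2) + 4^(c i' 1) = 4^(c i' 0) + 4^(c i' 2) + 4^(c i 1) := by exact_mod_cast hZ
      have hM := pow_triple_multiset hN
      have hx : ∀ t : ℕ, t ∈ ({c i 0, c i 2, c i' 1} : Multiset ℕ) ↔ t ∈ ({c i' 0, c i' 2, c i 1} : Multiset ℕ) :=
        fun t => by rw [hM]
      simp only [Multiset.insert_eq_cons, Multiset.mem_cons, Multiset.mem_singleton] at hx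
      have e1 := hx (c i 0); have e2 := hx (c i 2); have e3 := hx (c i' 1)
      have e4 := hx (c i' 0); have e5 := hx (c i' 2); have e6 := hx (c i 1)
      first
      | (exfalso; omega)
      | (simp only [Prod.mk.injEq]
         exact ⟨key i i' (by omega) (by omega) (by omega), by decide⟩)
    · have hZ : (4:ℤ)^(c i 0) + 4^(c i 2) + 4^(c i' 2) = 4^(c i' 0) + 4^(c i' 1) + 4^(c i 1) := by linarith
      have hN : (4:ℕ)^(c i 0) + 4^(c i 2) + 4^(c i' 2) = 4^(c i' 0) + 4^(c i' 1) + 4^(c i 1) := by exact_mod_cast hZ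
      have hM := pow_triple_multiset hN
      have hx : ∀ t : ℕ, t ∈ ({c i 0, c i 2, c i' 2} : Multiset ℕ) ↔ t ∈ ({c i' 0, c i' 1, c i 1} : Multiset ℕ) :=
        fun t => by rw [hM]
      simp only [Multiset.insert_eq_cons, Multiset.mem_cons, Multiset.mem_singleton] at hx
      have e1 := hx (c i 0); have e2 := hx (c i 2); have e3 := hx (c i' 2)
      have e4 := hx (c i' 0); have e5 := hx (c i' 1); have e6 := hx (c i 1)
      first
      | (exfalso; omega)
      | (simp only [Prod.mk.injEq]
         exact ⟨key i i' (by omega) (by omega) (by omega), by decide⟩)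
    · have hZ : (4:ℤ)^(c i 0) + 4^(c i 1) + 4^(c i' 0) = 4^(c i' 1) + 4^(c i' 2) + 4^(c i 2) := by linarith
      have hN : (4:ℕ)^(c i 0) + 4^(c i 1) + 4^(c i' 0) = 4^(c i' 1) + 4^(c i' 2) + 4^(c i 2) := by exact_mod_cast hZ
      have hM := pow_triple_multiset hN
      have hx : ∀ t : ℕ, t ∈ ({c i 0, c i 1, c i' 0} : Multiset ℕ) ↔ t ∈ ({c i' 1, c i' 2, c i 2} : Multiset ℕ) :=
        fun t => by rw [hM]
      simp only [Multiset.insert_eq_cons, Multiset.mem_cons, Multiset.mem_singleton] at hx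
      have e1 := hx (c i 0); have e2 := hx (c i 1); have e3 := hx (c i' 0)
      have e4 := hx (c i' 1); have e5 := hx (c i' 2); have e6 := hx (c i 2)
      first
      | (exfalso; omega)
      | (simp only [Prod.mk.injEq]
         exact ⟨key i i' (by omega) (by omega) (by omega), by decide⟩)
    · have hZ : (4:ℤ)^(c i 0) + 4^(c i 1) + 4^(c i' 1) = 4^(c i' 0) + 4^(c i' 2) + 4^(c i 2) := by linarith
      have hN : (4:ℕ)^(c i 0) + 4^(c i 1) + 4^(c i' 1) = 4^(c i' 0) + 4^(c i' 2) + 4^(c i 2) := by exact_mod_cast hZ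
      have hM := pow_triple_multiset hN
      have hx : ∀ t : ℕ, t ∈ ({c i 0, c i 1, c i' 1} : Multiset ℕ) ↔ t ∈ ({c i' 0, c i' 2, c i 2} : Multiset ℕ) :=
        fun t => by rw [hM]
      simp only [Multiset.insert_eq_cons, Multiset.mem_cons, Multiset.mem_singleton] at hx
      have e1 := hx (c i 0); have e2 := hx (c i 1); have e3 := hx (c i' 1)
      have e4 := hx (c i' 0); have e5 := hx (c i' 2); have e6 := hx (c i 2)
      first
      | (exfalso; omega)
      | (simp only [Prod.mk.injEq]
         exact ⟨key i i' (by omega) (by omega) (by omega), by decide⟩)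
    · have hZ : (4:ℤ)^(c i 0) + 4^(c i 1) + 4^(c i' 2) = 4^(c i' 0) + 4^(c i' 1) + 4^(c i 2) := by linarith
      have hN : (4:ℕ)^(c i 0) + 4^(c i 1) + 4^(c i' 2) = 4^(c i' 0) + 4^(c i' 1) + 4^(c i 2) := by exact_mod_cast hZ
      have hM := pow_triple_multiset hN
      have hx : ∀ t : ℕ, t ∈ ({c i 0, c i 1, c i' 2} : Multiset ℕ) ↔ t ∈ ({c i' 0, c i' 1, c i 2} : Multiset ℕ) :=
        fun t => by rw [hM]
      simp only [Multiset.insert_eq_cons, Multiset.mem_cons, Multiset.mem_singleton] at hx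
      have e1 := hx (c i 0); have e2 := hx (c i 1); have e3 := hx (c i' 2)
      have e4 := hx (c i' 0); have e5 := hx (c i' 1); have e6 := hx (c i 2)
      first
      | (exfalso; omega)
      | (simp only [Prod.mk.injEq]
         exact ⟨key i i' (by omega) (by omega) (by omega), by decide⟩)
  · have hsub : (edgePlus (fun p : Fin n × Fin 3 =>
        (4:ℤ)^(c p.1 0) + 4^(c p.1 1) + 4^(c p.1 2) - 2*4^(c p.1 p.2)) ''
        (disjointTriangles n).edgeSet) ⊆ Set.range (fun j : Fin k => 2*(4:ℤ)^(j:ℕ)) := by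
      rintro x ⟨e, he, rfl⟩
      induction e using Sym2.ind with
      | _ p q =>
        rw [SimpleGraph.mem_edgeSet, dt_adj] at he
        obtain ⟨hne, hfst⟩ := he
        obtain ⟨i, v⟩ := p; obtain ⟨i2, w⟩ := q
        simp only at hfst
        subst hfst
        have hvw : v ≠ w := fun hh => hne (by rw [hh])
        rw [edgePlus_mk]
        simp only
        have fe0 : ∀ (hh : 0 < 3), (⟨0, hh⟩ : Fin 3) = 0 := fun _ => rfl
        have fe1 : ∀ (hh : 1 < 3), (⟨1, hh⟩ : Fin 3) = 1 := fun _ => rfl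
        have fe2 : ∀ (hh : 2 < 3), (⟨2, hh⟩ : Fin 3) = 2 := fun _ => rfl
        fin_cases v <;> fin_cases w <;> simp only [fe0, fe1, fe2] at hvw ⊢
        · exact absurd rfl hvw
        · exact Set.mem_range.mpr ⟨⟨c i 2, hck i 2⟩, by push_cast; ring⟩
        · exact Set.mem_range.mpr ⟨⟨c i 1, hck i 1⟩, by push_cast; ring⟩
        · exact Set.mem_range.mpr ⟨⟨c i 2, hck i 2⟩, by push_cast; ring⟩
        · exact absurd rfl hvw
        · exact Set.mem_range.mpr ⟨⟨c i 0, hck i 0⟩, by push_cast; ring⟩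
        · exact Set.mem_range.mpr ⟨⟨c i 1, hck i 1⟩, by push_cast; ring⟩
        · exact Set.mem_range.mpr ⟨⟨c i 0, hck i 0⟩, by push_cast; ring⟩
        · exact absurd rfl hvw
    calc (edgePlus _ '' (disjointTriangles n).edgeSet).ncard
        ≤ (Set.range (fun j : Fin k => 2*(4:ℤ)^(j:ℕ))).ncard :=
          Set.ncard_le_ncard hsub (Set.finite_range _)
      _ ≤ k := by
          rw [← Set.image_univ]
          refine le_trans (Set.ncard_image_le Set.finite_univ) ?_
          simp [Set.ncard_univ]


lemma lower (n : ℕ) (g : Fin n × Fin 3 → ℤ) (hg : Function.Injective g) :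
    n ≤ ((edgePlus g '' (disjointTriangles n).edgeSet).ncard).choose 3 := by
  classical
  have hES : ((disjointTriangles n).edgeSet).Finite := Set.toFinite _
  have hfin : (edgePlus g '' (disjointTriangles n).edgeSet).Finite := hES.image _
  have hcardF : (edgePlus g '' (disjointTriangles n).edgeSet).ncard = hfin.toFinset.card :=
    Set.ncard_eq_toFinset_card _ hfin
  have gne : ∀ (i : Fin n) (v w : Fin 3), v ≠ w → g (i,v) ≠ g (i,w) :=
    fun i v w hvw h => hvw (congrArg Prod.snd (hg h))
  have hadj : ∀ (i : Fin n) (v w : Fin 3), v ≠ w →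
      s((i,v),(i,w)) ∈ (disjointTriangles n).edgeSet := by
    intro i v w hvw
    rw [SimpleGraph.mem_edgeSet, dt_adj]
    exact ⟨fun h => hvw (congrArg Prod.snd h), rfl⟩
  have hsF : ∀ (i : Fin n) (v w : Fin 3), v ≠ w → g (i,v) + g (i,w) ∈ hfin.toFinset :=
    fun i v w hvw => hfin.mem_toFinset.mpr ⟨_, hadj i v w hvw, rfl⟩
  set trip : Fin n → Finset ℤ :=
    fun i => {g (i,0) + g (i,1), g (i,0) + g (i,2), g (i,1) + g (i,2)} with htripdef
  have htrip_mem : ∀ i, trip i ∈ hfin.toFinset.powersetCard 3 := by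
    intro i
    rw [Finset.mem_powersetCard]
    constructor
    · intro x hx
      simp only [htripdef, Finset.mem_insert, Finset.mem_singleton] at hx
      rcases hx with h | h | h <;> rw [h]
      · exact hsF i 0 1 (by decide)
      · exact hsF i 0 2 (by decide)
      · exact hsF i 1 2 (by decide)
    · have d1 := gne i 0 1 (by decide)
      have d2 := gne i 0 2 (by decide)
      have d3 := gne i 1 2 (by decide)
      refine Finset.card_eq_three.mpr ⟨_, _, _, ?_, ?_, ?_, rfl⟩ <;> omega
  have tripinj : Function.Injective trip := by
    intro i i' heq
    have m1 : g (i,0) + g (i,1) ∈ trip i' := by rw [← heq]; simp [htripdef]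
    have m2 : g (i,0) + g (i,2) ∈ trip i' := by rw [← heq]; simp [htripdef]
    have m3 : g (i,1) + g (i,2) ∈ trip i' := by rw [← heq]; simp [htripdef]
    have m4 : g (i',0) + g (i',1) ∈ trip i := by rw [heq]; simp [htripdef]
    have m5 : g (i',0) + g (i',2) ∈ trip i := by rw [heq]; simp [htripdef]
    have m6 : g (i',1) + g (i',2) ∈ trip i := by rw [heq]; simp [htripdef]
    simp only [htripdef, Finset.mem_insert, Finset.mem_singleton] at m1 m2 m3 m4 m5 m6
    have d1 := gne i 0 1 (by decide)
    have d2 := gne i 0 2 (by decide)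
    have d3 := gne i 1 2 (by decide)
    have d4 := gne i' 0 1 (by decide)
    have d5 := gne i' 0 2 (by decide)
    have d6 := gne i' 1 2 (by decide)
    have hd : g (i,0) = g (i',0) ∨ g (i,0) = g (i',1) ∨ g (i,0) = g (i',2) := by omega
    rcases hd with h | h | h <;> exact congrArg Prod.fst (hg h)
  have hembinj : Function.Injective
      (fun i : Fin n => (⟨trip i, htrip_mem i⟩ : {s // s ∈ hfin.toFinset.powersetCard 3})) :=
    fun i i' h => tripinj (congrArg Subtype.val h)
  have hcard := Fintype.card_le_of_injective _ hembinj
  rw [Fintype.card_fin, Fintype.card_coe, Finset.card_powersetCard] at hcard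
  rw [hcardF]
  exact hcard

theorem stmt3 (n k : ℕ) (hn : 1 ≤ n) (hk : 0 < k) (hkn : n ≤ k.choose 3)
    (hmin : ∀ k', 0 < k' → n ≤ k'.choose 3 → k ≤ k') :
    sumIndex (disjointTriangles n) = k := by
  obtain ⟨f, hfinj, hle⟩ := upper n k hkn
  set S : Set ℕ := {m | ∃ f : Fin n × Fin 3 → ℤ, Function.Injective f ∧
    (edgePlus f '' (disjointTriangles n).edgeSet).ncard = m} with hS
  have hsum : sumIndex (disjointTriangles n) = sInf S := rfl
  have hmem : (edgePlus f '' (disjointTriangles n).edgeSet).ncard ∈ S := ⟨f, hfinj, rfl⟩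
  have hub : sumIndex (disjointTriangles n) ≤ k := by
    rw [hsum]; exact le_trans (Nat.sInf_le hmem) hle
  have hmemInf : sInf S ∈ S := Nat.sInf_mem (Set.nonempty_of_mem hmem)
  obtain ⟨g, hginj, hgcard⟩ := hmemInf
  have hlow := lower n g hginj
  rw [hgcard] at hlow
  have hpos : 0 < sInf S := by
    rcases Nat.eq_zero_or_pos (sInf S) with h | h
    · rw [h] at hlow; simp [Nat.choose] at hlow; omega
    · exact h
  have := hmin _ hpos hlow
  rw [hsum]
  omega
end

section
/- For every integer n ≥ 3, the sum index of the cycle C_n equals 3. -/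
open SimpleGraph Function

open scoped Fin.CommRing Fin.NatCast

/-- The zig-zag labeling 0, 1, -1, 2, -2, 3, ... on ℕ. -/
def zig (k : ℕ) : ℤ := if k % 2 = 0 then -((k / 2 : ℕ) : ℤ) else ((k / 2 : ℕ) : ℤ) + 1

lemma zig_inj : Function.Injective zig := by
  intro a b h
  unfold zig at h
  split_ifs at h <;> omega

lemma zig_succ (k : ℕ) : zig k + zig (k + 1) = if k % 2 = 0 then 1 else 0 := by
  unfold zig
  split_ifs <;> omega

lemma cycle_edges {n : ℕ} [NeZero n] (hn : 3 ≤ n) {u v : Fin n} (huv : (cycleGraph n).Adj u v) :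
    ∃ w : Fin n, s(u, v) = s(w, w + 1) := by
  rw [cycleGraph_adj'] at huv
  have h1 : (1 : Fin n).val = 1 := by rw [Fin.val_one']; exact Nat.mod_eq_of_lt (by omega)
  rcases huv with hc | hc
  · have : u = v + 1 := by
      have h2 : u - v = 1 := Fin.ext (by rw [hc, h1])
      rw [← h2]; ring
    subst this
    exact ⟨v, Sym2.eq_swap⟩
  · have : v = u + 1 := by
      have h2 : v - u = 1 := Fin.ext (by rw [hc, h1])
      rw [← h2]; ring
    subst this
    exact ⟨u, rfl⟩

lemma cycle_adj_succ {n : ℕ} [NeZero n] (hn : 3 ≤ n) (v : Fin n) : (cycleGraph n).Adj v (v + 1) := by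
  rw [cycleGraph_adj']
  right
  rw [add_sub_cancel_left, Fin.val_one']
  exact Nat.mod_eq_of_lt (by omega)

lemma fin_val_add_one {n : ℕ} [NeZero n] (hn : 3 ≤ n) (v : Fin n) : (v + 1).val = (v.val + 1) % n := by
  have h1 : 1 % n = 1 := Nat.mod_eq_of_lt (by omega)
  rw [Fin.add_def, Fin.val_one', h1]

theorem stmt4 (n : ℕ) (hn : 3 ≤ n) : sumIndex (SimpleGraph.cycleGraph n) = 3 := by
  haveI : NeZero n := ⟨by omega⟩
  have h1n : 1 % n = 1 := Nat.mod_eq_of_lt (by omega)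
  -- Upper bound: the zig-zag labeling realizes exactly 3 edge sums.
  have hmem3 : (3 : ℕ) ∈ {k | ∃ f : Fin n → ℤ, Function.Injective f ∧
      (edgePlus f '' (cycleGraph n).edgeSet).ncard = k} := by
    refine ⟨fun i => zig i.val, fun a b hab => Fin.ext (zig_inj hab), ?_⟩
    set c : ℤ := zig (n - 1) with hc
    have hzig0 : zig 0 = 0 := by unfold zig; norm_num
    have hc0 : c ≠ 0 := by rw [hc]; unfold zig; split_ifs <;> omega
    have hc1 : c ≠ 1 := by rw [hc]; unfold zig; split_ifs <;> omega
    -- the sum along an edge (v, v+1)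
    have hsum : ∀ v : Fin n, zig (v + 1).val + zig v.val =
        if v.val = n - 1 then c else (if v.val % 2 = 0 then 1 else 0) := by
      intro v
      rw [fin_val_add_one hn v]
      by_cases hv : v.val = n - 1
      · have h0 : (v.val + 1) % n = 0 := by
          rw [hv]
          have : n - 1 + 1 = n := by omega
          rw [this, Nat.mod_self]
        rw [h0, hzig0, if_pos hv, hv, hc]
        ring
      · have hlt : v.val + 1 < n := by have := v.isLt; omega
        rw [Nat.mod_eq_of_lt hlt, if_neg hv, add_comm, zig_succ]
    have himg : edgePlus (fun i => zig i.val) '' (cycleGraph n).edgeSet = {0, 1, c} := by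
      ext x
      constructor
      · rintro ⟨e, he, rfl⟩
        induction e with
        | h u v =>
          rw [SimpleGraph.mem_edgeSet] at he
          obtain ⟨w, hw⟩ := cycle_edges hn he
          rw [hw]
          have : edgePlus (fun i => zig i.val) s(w, w + 1) = zig (w + 1).val + zig w.val := by
            show zig w.val + zig (w+1).val = _
            ring
          rw [this, hsum w]
          split_ifs with h1 h2
          · right; right; rfl
          · right; left; rfl
          · left; rfl
      · intro hx
        have key : ∀ v : Fin n, edgePlus (fun i => zig i.val) s(v, v + 1) =
            if v.val = n - 1 then c else (if v.val % 2 = 0 then 1 else 0) := by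
          intro v
          show zig v.val + zig (v + 1).val = _
          rw [add_comm]
          exact hsum v
        rcases hx with rfl | rfl | rfl
        · -- value 0 from the edge (1, 2)
          refine ⟨s((1 : Fin n), (1 : Fin n) + 1),
            (SimpleGraph.mem_edgeSet _).mpr (cycle_adj_succ hn 1), ?_⟩
          have h1v : (1 : Fin n).val = 1 := by rw [Fin.val_one']; exact h1n
          rw [key 1, h1v, if_neg (by omega), if_neg (by omega)]
        · -- value 1 from the edge (0, 1)
          refine ⟨s((0 : Fin n), (0 : Fin n) + 1),
            (SimpleGraph.mem_edgeSet _).mpr (cycle_adj_succ hn 0), ?_⟩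
          rw [key 0, Fin.val_zero, if_neg (by omega), if_pos (by omega)]
        · -- value c from the edge (n-1, 0)
          refine ⟨s((⟨n - 1, by omega⟩ : Fin n), (⟨n - 1, by omega⟩ : Fin n) + 1),
            (SimpleGraph.mem_edgeSet _).mpr (cycle_adj_succ hn _), ?_⟩
          rw [key ⟨n - 1, by omega⟩, if_pos rfl]
    rw [himg]
    rw [Set.ncard_eq_three]
    exact ⟨0, 1, c, by omega, fun h => hc0 h.symm, fun h => hc1 h.symm, rfl⟩
  -- Lower bound
  have hlb : ∀ k ∈ {k | ∃ f : Fin n → ℤ, Function.Injective f ∧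
      (edgePlus f '' (cycleGraph n).edgeSet).ncard = k}, 3 ≤ k := by
    rintro k ⟨f, hf, rfl⟩
    by_contra hlt
    push_neg at hlt
    set T := edgePlus f '' (cycleGraph n).edgeSet with hT
    have hTfin : T.Finite := Set.toFinite _
    -- indices along the cycle, lifted to ℕ
    set g : ℕ → ℤ := fun k => f (↑k : Fin n) with hg
    set s : ℕ → ℤ := fun k => g k + g (k + 1) with hs
    have hmemT : ∀ k : ℕ, s k ∈ T := by
      intro k
      have hadj : (cycleGraph n).Adj ↑k (↑k + 1) := cycle_adj_succ hn _
      refine ⟨s((↑k : Fin n), (↑k : Fin n) + 1), (SimpleGraph.mem_edgeSet _).mpr hadj, ?_⟩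
      show f ↑k + f ((↑k : Fin n) + 1) = g k + g (k + 1)
      have : ((↑(k + 1) : Fin n)) = (↑k : Fin n) + 1 := by push_cast; ring
      rw [hg]
      simp only []
      rw [this]
    have hcast_ne : ∀ k : ℕ, (↑k : Fin n) ≠ ↑(k + 2) := by
      intro k h
      have h2 : ((↑(k + 2) : Fin n)) = ↑k + ↑(2 : ℕ) := by push_cast; ring
      rw [h2, left_eq_add] at h
      have := congrArg Fin.val h
      rw [Fin.val_natCast, Fin.val_zero, Nat.mod_eq_of_lt (by omega)] at this
      omega
    have hne : ∀ k : ℕ, s k ≠ s (k + 1) := by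
      intro k h
      have : g k = g (k + 2) := by
        have := h
        simp only [hs] at this
        linarith
      exact hcast_ne k (hf this)
    have hs01 : s 0 ≠ s 1 := hne 0
    -- T = {s 0, s 1}
    have hTsub : ({s 0, s 1} : Set ℤ) ⊆ T := by
      rintro x (rfl | rfl)
      · exact hmemT 0
      · exact hmemT 1
    have hTeq : ({s 0, s 1} : Set ℤ) = T := by
      apply Set.eq_of_subset_of_ncard_le hTsub _ hTfin
      rw [Set.ncard_pair hs01]
      omega
    have hmem2 : ∀ k : ℕ, s k = s 0 ∨ s k = s 1 := by
      intro k
      have := hmemT k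
      rw [← hTeq] at this
      rcases this with h | h
      · exact Or.inl h
      · exact Or.inr h
    -- alternation
    have halt : ∀ m : ℕ, s (2 * m) = s 0 ∧ s (2 * m + 1) = s 1 := by
      intro m
      induction m with
      | zero => exact ⟨rfl, rfl⟩
      | succ m ih =>
        have h2 : s (2 * m + 2) = s 0 := by
          rcases hmem2 (2 * m + 2) with h | h
          · exact h
          · exfalso; exact hne (2 * m + 1) (by rw [ih.2, h])
        have h3 : s (2 * m + 3) = s 1 := by
          rcases hmem2 (2 * m + 3) with h | h
          · exfalso; exact hne (2 * m + 2) (by rw [h2, h])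
          · exact h
        constructor
        · have : 2 * (m + 1) = 2 * m + 2 := by ring
          rw [this]; exact h2
        · have : 2 * (m + 1) + 1 = 2 * m + 3 := by ring
          rw [this]; exact h3
    -- telescoping
    have htel : ∀ m : ℕ, g (2 * m) = g 0 + m * (s 1 - s 0) := by
      intro m
      induction m with
      | zero => simp
      | succ m ih =>
        have e1 : s (2 * m) = g (2 * m) + g (2 * m + 1) := rfl
        have e2 : s (2 * m + 1) = g (2 * m + 1) + g (2 * m + 2) := rfl
        have h1 : s (2 * m) = s 0 := (halt m).1
        have h2 : s (2 * m + 1) = s 1 := (halt m).2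
        have : 2 * (m + 1) = 2 * m + 2 := by ring
        rw [this]
        have : g (2 * m + 2) = g (2 * m) + (s 1 - s 0) := by
          rw [← h1, ← h2, e1, e2]; ring
        rw [this, ih]
        push_cast
        ring
    -- periodicity: g (k + n) = g k
    have hper : ∀ k : ℕ, g (k + n) = g k := by
      intro k
      show f ↑(k + n) = f ↑k
      congr 1
      push_cast
      simp
    rcases Nat.even_or_odd n with ⟨m, hm⟩ | ⟨m, hm⟩
    · -- n = 2m even
      have hg0 : g n = g 0 := by have := hper 0; simpa using this
      have := htel m
      rw [show 2 * m = n by omega, hg0] at this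
      have hm0 : (m : ℤ) ≠ 0 := by
        have : 2 ≤ m := by omega
        exact_mod_cast by omega
      have : s 1 - s 0 = 0 := by
        have h := this
        have : (m : ℤ) * (s 1 - s 0) = 0 := by linarith
        rcases mul_eq_zero.mp this with h' | h'
        · exact absurd h' hm0
        · exact h'
      exact hs01 (by linarith)
    · -- n = 2m+1 odd
      have h1 : s n = s 1 := by
        have := (halt m).2
        rw [show 2 * m + 1 = n by omega] at this
        exact this
      have h0 : s n = s 0 := by
        show g n + g (n + 1) = g 0 + g 1
        have ha : g n = g 0 := by have := hper 0; simpa using this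
        have hb : g (n + 1) = g 1 := by have := hper 1; simpa [add_comm] using this
        rw [ha, hb]
      exact hs01 (by rw [← h0, ← h1])
  exact le_antisymm (Nat.sInf_le hmem3) (le_csInf ⟨3, hmem3⟩ hlb)
end

section
/- For every spider graph S with Δ ≥ 3 legs, the sum index of S equals Δ. -/
open SimpleGraph Function

/-- A spider: a center vertex `none` together with `Δ` internally disjoint legs,
the `i`-th leg being a path on the vertices `some ⟨i, 0⟩, some ⟨i, 1⟩, …, some ⟨i, ℓ i − 1⟩`
attached to the center at `some ⟨i, 0⟩`. -/
def spider (Δ : ℕ) (ℓ : Fin Δ → ℕ) : SimpleGraph (Option (Σ i : Fin Δ, Fin (ℓ i))) :=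
  SimpleGraph.fromRel (fun a b =>
    (∃ (i : Fin Δ) (j : Fin (ℓ i)), a = none ∧ b = some ⟨i, j⟩ ∧ (j : ℕ) = 0) ∨
    (∃ (i : Fin Δ) (j j' : Fin (ℓ i)), a = some ⟨i, j⟩ ∧ b = some ⟨i, j'⟩ ∧
      (j' : ℕ) = (j : ℕ) + 1))

namespace SpiderAux

def coefC (p : ℕ) : ℤ := if p % 2 = 0 then ((p / 2 : ℕ) : ℤ) + 1 else -((p + 1) / 2 : ℕ)

def coefD (p : ℕ) : ℤ := if p % 2 = 0 then -((p / 2 : ℕ) : ℤ) else (((p + 1) / 2 : ℕ) : ℤ)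

lemma coefC_ne_zero (p : ℕ) : coefC p ≠ 0 := by
  unfold coefC; split <;> omega

lemma coefC_inj {p q : ℕ} (h : coefC p = coefC q) : p = q := by
  unfold coefC at h; split_ifs at h <;> omega

lemma abs_coefC_le (p : ℕ) : |coefC p| ≤ (p : ℤ) + 1 := by
  unfold coefC
  split <;> (rw [abs_le]; constructor <;> omega)

lemma abs_coefD_le (p : ℕ) : |coefD p| ≤ (p : ℤ) + 1 := by
  unfold coefD
  split <;> (rw [abs_le]; constructor <;> omega)

lemma coefC_add (p : ℕ) : coefC p + coefC (p + 1) = if p % 2 = 0 then 0 else 1 := by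
  unfold coefC; split_ifs <;> omega

lemma coefD_add (p : ℕ) : coefD p + coefD (p + 1) = if p % 2 = 0 then 1 else 0 := by
  unfold coefD; split_ifs <;> omega

lemma digits_zero (B : ℤ) (n : ℕ) : ∀ (e : ℕ → ℤ), (∀ t, |e t| < B) →
    (∑ t ∈ Finset.range n, e t * B ^ t) = 0 → ∀ t < n, e t = 0 := by
  induction n with
  | zero => intro e _ _ t ht; omega
  | succ n ih =>
    intro e he h t ht
    rw [Finset.sum_range_succ'] at h
    have hre : ∑ i ∈ Finset.range n, e (i + 1) * B ^ (i + 1)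
        = B * ∑ i ∈ Finset.range n, e (i + 1) * B ^ i := by
      rw [Finset.mul_sum]; exact Finset.sum_congr rfl (fun i _ => by ring)
    rw [hre] at h
    have hB0 : e 0 = 0 := by
      have hdvd : B ∣ e 0 := ⟨-∑ i ∈ Finset.range n, e (i + 1) * B ^ i, by linarith [h]⟩
      by_contra h0
      have : B ≤ |e 0| := Int.le_of_dvd (abs_pos.mpr h0) ((dvd_abs _ _).mpr hdvd)
      exact absurd (he 0) (not_lt.mpr this)
    have hBpos : (0 : ℤ) < B := lt_of_le_of_lt (abs_nonneg _) (he 0)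
    have hS : ∑ i ∈ Finset.range n, e (i + 1) * B ^ i = 0 := by
      have hmul : B * ∑ i ∈ Finset.range n, e (i + 1) * B ^ i = 0 := by
        rw [hB0] at h; linarith [h]
      rcases mul_eq_zero.mp hmul with h' | h'
      · exact absurd h' (by positivity)
      · exact h'
    rcases Nat.eq_zero_or_pos t with rfl | htpos
    · exact hB0
    · obtain ⟨s, rfl⟩ : ∃ s, t = s + 1 := ⟨t - 1, by omega⟩
      exact ih (fun i => e (i + 1)) (fun i => he (i + 1)) hS s (by omega)

def nxt {Δ : ℕ} (i : Fin Δ) : Fin Δ :=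
  if h : i.val + 1 < Δ then ⟨i.val + 1, h⟩ else ⟨0, i.pos⟩

lemma nxt_val {Δ : ℕ} (i : Fin Δ) :
    (nxt i).val = if i.val + 1 < Δ then i.val + 1 else 0 := by
  unfold nxt; split <;> rfl

lemma nxt_ne {Δ : ℕ} (hΔ : 2 ≤ Δ) (i : Fin Δ) : (nxt i).val ≠ i.val := by
  have := i.isLt
  rw [nxt_val]; split <;> omega

lemma nxt_nxt_ne {Δ : ℕ} (hΔ : 3 ≤ Δ) (i : Fin Δ) : (nxt (nxt i)).val ≠ i.val := by
  have h1 := i.isLt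
  rw [nxt_val, nxt_val]
  split_ifs <;> omega

lemma sum_ind (n a : ℕ) (ha : a < n) (c B : ℤ) :
    ∑ t ∈ Finset.range n, (if t = a then c else 0) * B ^ t = c * B ^ a := by
  simp only [ite_mul, zero_mul]
  rw [Finset.sum_ite_eq' (Finset.range n) a (fun t => c * B ^ t)]
  simp [ha]

lemma ite_bounds (P : Prop) [Decidable P] (c : ℤ) :
    -|c| ≤ (if P then c else 0) ∧ (if P then c else 0) ≤ |c| := by
  split
  · exact ⟨neg_abs_le c, le_abs_self c⟩
  · exact ⟨neg_nonpos_of_nonneg (abs_nonneg c), abs_nonneg c⟩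


lemma key {Δ : ℕ} (hΔ : 3 ≤ Δ) (B : ℕ) (i i2 : Fin Δ) (c1 d1 c2 d2 : ℤ)
    (hb : |c1| + |d1| + |c2| + |d2| < (B : ℤ))
    (h : c1 * (B:ℤ) ^ i.val + d1 * (B:ℤ) ^ (nxt i).val
        = c2 * (B:ℤ) ^ i2.val + d2 * (B:ℤ) ^ (nxt i2).val)
    (hc1 : c1 ≠ 0) (hc2 : c2 ≠ 0) :
    i = i2 ∧ c1 = c2 ∧ d1 = d2 := by
  set e : ℕ → ℤ := fun t =>
    (if t = i.val then c1 else 0) + (if t = (nxt i).val then d1 else 0)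
      - (if t = i2.val then c2 else 0) - (if t = (nxt i2).val then d2 else 0) with he_def
  have he : ∀ t, |e t| < (B : ℤ) := by
    intro t
    have b1 := ite_bounds (t = i.val) c1
    have b2 := ite_bounds (t = (nxt i).val) d1
    have b3 := ite_bounds (t = i2.val) c2
    have b4 := ite_bounds (t = (nxt i2).val) d2
    rw [abs_lt]; constructor <;> (simp only [he_def]; linarith [b1.1, b1.2, b2.1, b2.2, b3.1, b3.2, b4.1, b4.2])
  have hsum : ∑ t ∈ Finset.range Δ, e t * (B:ℤ) ^ t = 0 := by
    simp only [he_def, sub_mul, add_mul]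
    rw [Finset.sum_sub_distrib, Finset.sum_sub_distrib, Finset.sum_add_distrib,
      sum_ind Δ i.val i.isLt, sum_ind Δ (nxt i).val (nxt i).isLt,
      sum_ind Δ i2.val i2.isLt, sum_ind Δ (nxt i2).val (nxt i2).isLt]
    linarith [h]
  have hz := digits_zero (B:ℤ) Δ e he hsum
  have hii2 : i.val = i2.val := by
    by_contra hne
    have h1 : e i.val = 0 := hz i.val i.isLt
    have h2 : e i2.val = 0 := hz i2.val i2.isLt
    simp only [he_def] at h1 h2
    rw [if_neg (Ne.symm (nxt_ne (by omega) i)), if_neg hne] at h1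
    rw [if_neg (Ne.symm hne)] at h2
    simp only [if_true] at h1 h2
    -- h1 : c1 + 0 - 0 - (if i.val = (nxt i2).val then d2 else 0) = 0
    have hi_n2 : i.val = (nxt i2).val := by
      by_contra h'
      rw [if_neg h'] at h1; simp at h1; exact hc1 h1
    have hi2_n1 : i2.val = (nxt i).val := by
      by_contra h'
      rw [if_neg h'] at h2
      rw [if_neg (by rw [← hi_n2]; exact fun hh => hne hh.symm)] at h2
      simp at h2; exact hc2 h2
    have : i2 = nxt i := Fin.ext hi2_n1
    rw [this] at hi_n2
    exact nxt_nxt_ne hΔ i hi_n2.symm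
  have hieq : i = i2 := Fin.ext hii2
  subst hieq
  have h1 : e i.val = 0 := hz i.val i.isLt
  have h2 : e (nxt i).val = 0 := hz (nxt i).val (nxt i).isLt
  simp only [he_def] at h1 h2
  rw [if_neg (Ne.symm (nxt_ne (by omega) i)), if_neg (Ne.symm (nxt_ne (by omega) i))] at h1
  rw [if_neg (nxt_ne (by omega) i), if_neg (nxt_ne (by omega) i)] at h2
  simp only [if_true] at h1 h2
  exact ⟨rfl, by linarith, by linarith⟩

lemma key0 {Δ : ℕ} (hΔ : 3 ≤ Δ) (B : ℕ) (i : Fin Δ) (c1 d1 : ℤ)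
    (hb : |c1| + |d1| < (B : ℤ))
    (h : c1 * (B:ℤ) ^ i.val + d1 * (B:ℤ) ^ (nxt i).val = 0) :
    c1 = 0 := by
  set e : ℕ → ℤ := fun t =>
    (if t = i.val then c1 else 0) + (if t = (nxt i).val then d1 else 0) with he_def
  have he : ∀ t, |e t| < (B : ℤ) := by
    intro t
    have b1 := ite_bounds (t = i.val) c1
    have b2 := ite_bounds (t = (nxt i).val) d1
    rw [abs_lt]; constructor <;> (simp only [he_def]; linarith [b1.1, b1.2, b2.1, b2.2])
  have hsum : ∑ t ∈ Finset.range Δ, e t * (B:ℤ) ^ t = 0 := by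
    simp only [he_def, add_mul]
    rw [Finset.sum_add_distrib, sum_ind Δ i.val i.isLt, sum_ind Δ (nxt i).val (nxt i).isLt]
    linarith [h]
  have h1 := digits_zero (B:ℤ) Δ e he hsum i.val i.isLt
  simp only [he_def] at h1
  rw [if_neg (Ne.symm (nxt_ne (by omega) i))] at h1
  simp only [if_true] at h1
  simpa using h1

def lab {Δ : ℕ} (ℓ : Fin Δ → ℕ) (B : ℕ) : Option (Σ i : Fin Δ, Fin (ℓ i)) → ℤ
  | none => 0
  | some ⟨i, j⟩ => coefC j.val * (B:ℤ) ^ i.val + coefD j.val * (B:ℤ) ^ (nxt i).val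

lemma lab_inj {Δ : ℕ} (ℓ : Fin Δ → ℕ) (hΔ : 3 ≤ Δ) (B : ℕ)
    (hb : ∀ (i : Fin Δ) (j : Fin (ℓ i)), 4 * ((j : ℕ) + 1) < B) :
    Function.Injective (lab ℓ B) := by
  have habs : ∀ (i : Fin Δ) (j : Fin (ℓ i)), |coefC j.val| + |coefD j.val| ≤ 2 * (j.val + 1) := by
    intro i j
    have h1 := abs_coefC_le j.val
    have h2 := abs_coefD_le j.val
    push_cast; linarith
  intro a b hab
  match a, b with
  | none, none => rfl
  | none, some ⟨i, j⟩ =>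
    exfalso
    apply coefC_ne_zero j.val
    apply key0 hΔ B i _ _ _ hab.symm
    have := habs i j; have := hb i j
    have : (4 * ((j : ℕ) + 1) : ℤ) < B := by exact_mod_cast hb i j
    push_cast at *; linarith
  | some ⟨i, j⟩, none =>
    exfalso
    apply coefC_ne_zero j.val
    apply key0 hΔ B i _ _ _ hab
    have := habs i j
    have : (4 * ((j : ℕ) + 1) : ℤ) < B := by exact_mod_cast hb i j
    push_cast at *; linarith
  | some ⟨i, j⟩, some ⟨i2, j2⟩ =>
    have hb1 : (4 * ((j : ℕ) + 1) : ℤ) < B := by exact_mod_cast hb i j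
    have hb2 : (4 * ((j2 : ℕ) + 1) : ℤ) < B := by exact_mod_cast hb i2 j2
    have h1 := habs i j
    have h2 := habs i2 j2
    obtain ⟨hi, hc, -⟩ := key hΔ B i i2 (coefC j.val) (coefD j.val) (coefC j2.val) (coefD j2.val)
      (by push_cast at *; linarith) hab (coefC_ne_zero _) (coefC_ne_zero _)
    subst hi
    have : j = j2 := Fin.ext (coefC_inj hc)
    rw [this]

lemma lab_center {Δ : ℕ} (ℓ : Fin Δ → ℕ) (B : ℕ) (i : Fin Δ) (j : Fin (ℓ i))
    (hj : (j : ℕ) = 0) :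
    lab ℓ B none + lab ℓ B (some ⟨i, j⟩) = (B:ℤ) ^ i.val := by
  simp [lab, hj]
  norm_num [coefC, coefD]

lemma lab_step {Δ : ℕ} (ℓ : Fin Δ → ℕ) (B : ℕ) (i : Fin Δ) (j j' : Fin (ℓ i))
    (hj : (j' : ℕ) = (j : ℕ) + 1) :
    lab ℓ B (some ⟨i, j⟩) + lab ℓ B (some ⟨i, j'⟩) =
      if (j : ℕ) % 2 = 0 then (B:ℤ) ^ (nxt i).val else (B:ℤ) ^ i.val := by
  have h1 := coefC_add j.val
  have h2 := coefD_add j.val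
  simp only [lab, hj]
  split_ifs with hp
  · rw [if_pos hp] at h1 h2
    linear_combination ((B:ℤ) ^ i.val) * h1 + ((B:ℤ) ^ (nxt i).val) * h2
  · rw [if_neg hp] at h1 h2
    linear_combination ((B:ℤ) ^ i.val) * h1 + ((B:ℤ) ^ (nxt i).val) * h2

end SpiderAux

open SpiderAux in
theorem stmt5 (Δ : ℕ) (ℓ : Fin Δ → ℕ) (hΔ : 3 ≤ Δ) (hℓ : ∀ i, 1 ≤ ℓ i) :
    sumIndex (spider Δ ℓ) = Δ := by
  classical
  set S := {k | ∃ f : Option (Σ i : Fin Δ, Fin (ℓ i)) → ℤ,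
      Function.Injective f ∧ (edgePlus f '' (spider Δ ℓ).edgeSet).ncard = k} with hS
  -- lower bound
  have hlow : ∀ k ∈ S, Δ ≤ k := by
    rintro k ⟨f, hf, rfl⟩
    set g : Fin Δ → ℤ := fun i => f none + f (some ⟨i, ⟨0, hℓ i⟩⟩) with hg
    have hginj : Function.Injective g := by
      intro a b hab
      have h2 := hf (add_left_cancel hab)
      simp at h2
      exact h2.1
    have hsub : g '' Set.univ ⊆ edgePlus f '' (spider Δ ℓ).edgeSet := by
      rintro x ⟨i, -, rfl⟩
      refine ⟨s(none, some ⟨i, ⟨0, hℓ i⟩⟩), ?_, rfl⟩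
      rw [SimpleGraph.mem_edgeSet, spider, SimpleGraph.fromRel_adj]
      exact ⟨by simp, Or.inl (Or.inl ⟨i, ⟨0, hℓ i⟩, rfl, rfl, rfl⟩)⟩
    calc Δ = (g '' Set.univ).ncard := by
            rw [Set.ncard_image_of_injective _ hginj, Set.ncard_univ]; simp
      _ ≤ (edgePlus f '' (spider Δ ℓ).edgeSet).ncard :=
            Set.ncard_le_ncard hsub (Set.toFinite _)
  -- upper bound construction
  set M : ℕ := Finset.univ.sup ℓ with hM
  set B : ℕ := 4 * M + 1 with hB
  have hBb : ∀ (i : Fin Δ) (j : Fin (ℓ i)), 4 * ((j : ℕ) + 1) < B := by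
    intro i j
    have h1 : ℓ i ≤ M := Finset.le_sup (Finset.mem_univ i)
    have h2 := j.isLt
    omega
  have hB2 : 2 ≤ B := by
    have : 1 ≤ M := le_trans (hℓ ⟨0, by omega⟩) (Finset.le_sup (Finset.mem_univ _))
    omega
  have hpowinj : Function.Injective (fun i : Fin Δ => (B:ℤ) ^ i.val) := by
    intro a b hab
    simp only at hab
    have : (B:ℕ) ^ a.val = B ^ b.val := by exact_mod_cast hab
    exact Fin.ext (Nat.pow_right_injective hB2 this)
  have himg : edgePlus (lab ℓ B) '' (spider Δ ℓ).edgeSet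
      = Set.range (fun i : Fin Δ => (B:ℤ) ^ i.val) := by
    apply Set.Subset.antisymm
    · rintro x ⟨e, he, rfl⟩
      induction e using Sym2.ind with
      | _ u v =>
        rw [SimpleGraph.mem_edgeSet, spider, SimpleGraph.fromRel_adj] at he
        obtain ⟨hne, h | h⟩ := he
        · obtain ⟨i, j, rfl, rfl, hj⟩ | ⟨i, j, j', rfl, rfl, hj⟩ := h
          · exact ⟨i, by simpa [edgePlus] using (lab_center ℓ B i j hj).symm⟩
          · refine ⟨if (j : ℕ) % 2 = 0 then nxt i else i, ?_⟩
            have := lab_step ℓ B i j j' hj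
            simp only [edgePlus, Sym2.lift_mk]
            split_ifs at this ⊢ <;> simp [this]
        · obtain ⟨i, j, rfl, rfl, hj⟩ | ⟨i, j, j', rfl, rfl, hj⟩ := h
          · refine ⟨i, ?_⟩
            have := lab_center ℓ B i j hj
            simp only [edgePlus, Sym2.lift_mk]
            linarith [this]
          · refine ⟨if (j : ℕ) % 2 = 0 then nxt i else i, ?_⟩
            have := lab_step ℓ B i j j' hj
            simp only [edgePlus, Sym2.lift_mk]
            split_ifs at this ⊢ <;> linarith [this]
    · rintro x ⟨i, rfl⟩
      refine ⟨s(none, some ⟨i, ⟨0, hℓ i⟩⟩), ?_, ?_⟩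
      · rw [SimpleGraph.mem_edgeSet, spider, SimpleGraph.fromRel_adj]
        exact ⟨by simp, Or.inl (Or.inl ⟨i, ⟨0, hℓ i⟩, rfl, rfl, rfl⟩)⟩
      · simpa [edgePlus] using lab_center ℓ B i ⟨0, hℓ i⟩ rfl
  have hmem : Δ ∈ S := by
    refine ⟨lab ℓ B, lab_inj ℓ hΔ B hBb, ?_⟩
    rw [himg, ← Set.image_univ, Set.ncard_image_of_injective _ hpowinj, Set.ncard_univ]
    simp
  rw [sumIndex]
  exact le_antisymm (Nat.sInf_le hmem) (le_csInf ⟨Δ, hmem⟩ hlow)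
end

section
/- For the d-dimensional rectangular grid G with all side lengths at least 3 (so maximum degree 2d), the sum index of G equals 2d. -/
open SimpleGraph Function

/-- The `d`-dimensional rectangular grid with side lengths `n 0, …, n (d−1)`:
two vertices are adjacent iff they differ by `1` in exactly one coordinate. -/
def gridD (d : ℕ) (n : Fin d → ℕ) : SimpleGraph ((i : Fin d) → Fin (n i)) :=
  SimpleGraph.fromRel (fun p q => (∑ i, |(p i : ℤ) - (q i : ℤ)|) = 1)

section Aux

variable {d : ℕ} {n : Fin d → ℕ}

lemma sum_abs_one {F : Fin d → ℤ} (h0 : ∀ i, 0 ≤ F i) (hs : ∑ i, F i = 1) :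
    ∃ i, F i = 1 ∧ ∀ j, j ≠ i → F j = 0 := by
  have hne : ∃ i, F i ≠ 0 := by
    by_contra h
    push_neg at h
    simp [h] at hs
  obtain ⟨i, hi⟩ := hne
  have h1 : 1 ≤ F i := lt_of_le_of_ne (h0 i) (Ne.symm hi)
  have hrest : ∑ j ∈ Finset.univ.erase i, F j = 1 - F i := by
    have := Finset.add_sum_erase Finset.univ F (Finset.mem_univ i)
    omega
  have hrest0 : 0 ≤ ∑ j ∈ Finset.univ.erase i, F j :=
    Finset.sum_nonneg fun j _ => h0 j
  have hFi : F i = 1 := by omega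
  have hzero : ∀ j ∈ Finset.univ.erase i, F j = 0 := by
    intro j hj
    have := Finset.sum_eq_zero_iff_of_nonneg (fun j _ => h0 j) |>.1 (by omega) j hj
    exact this
  exact ⟨i, hFi, fun j hj => hzero j (Finset.mem_erase.2 ⟨hj, Finset.mem_univ j⟩)⟩

/-- mixed-radix weights -/
def Bz (n : Fin d → ℕ) (i : Fin d) : ℤ := ∏ j : Fin i, (n (Fin.castLE i.is_lt.le j) : ℤ)

def Wz (n : Fin d → ℕ) (p : ∀ i, Fin (n i)) : ℤ := ∑ i, (p i : ℤ) * Bz n i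

lemma Wz_eq (p : ∀ i, Fin (n i)) : Wz n p = ((finPiFinEquiv p : ℕ) : ℤ) := by
  rw [finPiFinEquiv_apply]
  push_cast
  rfl

lemma Wz_inj : Function.Injective (Wz (n := n)) := by
  intro p q h
  rw [Wz_eq, Wz_eq] at h
  exact finPiFinEquiv.injective (Fin.val_injective (Nat.cast_injective h))

lemma Wz_nonneg (p : ∀ i, Fin (n i)) : 0 ≤ Wz n p := by
  rw [Wz_eq]; positivity

/-- the labeling -/
def lab (n : Fin d → ℕ) (p : ∀ i, Fin (n i)) : ℤ :=
  (-1 : ℤ) ^ (∑ i, (p i : ℕ)) * (1 + Wz n p)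

lemma lab_inj : Function.Injective (lab (n := n)) := by
  intro p q h
  have hp := Wz_nonneg p
  have hq := Wz_nonneg q
  have h1 : |lab n p| = 1 + Wz n p := by
    rw [lab, abs_mul, abs_pow, abs_neg, abs_one, one_pow, one_mul, abs_of_nonneg (by omega)]
  have h2 : |lab n q| = 1 + Wz n q := by
    rw [lab, abs_mul, abs_pow, abs_neg, abs_one, one_pow, one_mul, abs_of_nonneg (by omega)]
  have hW : Wz n p = Wz n q := by rw [h] at h1; omega
  exact Wz_inj hW

lemma sign_flip {a b : ℕ} (h : (a : ℤ) = b + 1 ∨ (b : ℤ) = a + 1) :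
    (-1 : ℤ) ^ a = -(-1 : ℤ) ^ b := by
  rcases h with h | h
  · have : a = b + 1 := by omega
    subst this; rw [pow_succ]; ring
  · have : b = a + 1 := by omega
    subst this; rw [pow_succ]; ring

/-- adjacency decomposition -/
lemma adj_decomp {p q : ∀ i, Fin (n i)} (h : (gridD d n).Adj p q) :
    ∃ i, |(p i : ℤ) - (q i : ℤ)| = 1 ∧ ∀ j, j ≠ i → (p j : ℤ) = (q j : ℤ) := by
  rw [gridD, SimpleGraph.fromRel_adj] at h
  have hs : ∑ i, |(p i : ℤ) - (q i : ℤ)| = 1 := by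
    rcases h.2 with h' | h'
    · exact h'
    · rw [← h']
      exact Finset.sum_congr rfl fun i _ => abs_sub_comm _ _
  obtain ⟨i, hi, hz⟩ := sum_abs_one (fun i => abs_nonneg _) hs
  exact ⟨i, hi, fun j hj => by have := hz j hj; rw [abs_eq_zero] at this; omega⟩

/-- key edge-sum computation for the labeling -/
lemma lab_edge_sum {p q : ∀ i, Fin (n i)} (h : (gridD d n).Adj p q) :
    ∃ i, lab n p + lab n q = Bz n i ∨ lab n p + lab n q = -Bz n i := by
  obtain ⟨i, hi, heq⟩ := adj_decomp h
  refine ⟨i, ?_⟩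
  -- parity flip
  have hsum : (∑ j, (q j : ℕ) : ℤ) - (∑ j, (p j : ℕ) : ℤ) = (q i : ℤ) - (p i : ℤ) := by
    push_cast
    rw [← Finset.sum_sub_distrib]
    rw [Finset.sum_eq_single i]
    · intro j _ hj
      have := heq j hj; omega
    · intro hmem; exact absurd (Finset.mem_univ i) hmem
  have hflip : (-1 : ℤ) ^ (∑ j, (q j : ℕ)) = -(-1 : ℤ) ^ (∑ j, (p j : ℕ)) := by
    apply sign_flip
    push_cast
    rw [abs_sub_comm] at hi
    rcases abs_eq (by norm_num : (0:ℤ) ≤ 1) |>.1 hi with h' | h' <;> omega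
  -- W difference
  have hW : Wz n p - Wz n q = ((p i : ℤ) - (q i : ℤ)) * Bz n i := by
    rw [Wz, Wz, ← Finset.sum_sub_distrib, Finset.sum_eq_single i]
    · ring
    · intro j _ hj
      rw [heq j hj]; ring
    · intro hmem; exact absurd (Finset.mem_univ i) hmem
  have hps : lab n p + lab n q = (-1 : ℤ) ^ (∑ j, (p j : ℕ)) * (Wz n p - Wz n q) := by
    rw [lab, lab, hflip]; ring
  rcases abs_eq (by norm_num : (0:ℤ) ≤ 1) |>.1 hi with h' | h'
  · -- p i - q i = 1
    rw [hps, hW, h', one_mul]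
    rcases Nat.even_or_odd (∑ j, (p j : ℕ)) with he | ho
    · left; rw [he.neg_one_pow, one_mul]
    · right; rw [ho.neg_one_pow]; ring
  · -- p i - q i = -1
    rw [hps, hW, h']
    rcases Nat.even_or_odd (∑ j, (p j : ℕ)) with he | ho
    · right; rw [he.neg_one_pow]; ring
    · left; rw [ho.neg_one_pow]; ring

end Aux

theorem stmt8 (d : ℕ) (hd : 0 < d) (n : Fin d → ℕ) (hn : ∀ i, 3 ≤ n i) :
    sumIndex (gridD d n) = 2 * d := by
  classical
  set V := (∀ i : Fin d, Fin (n i)) with hV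
  set G := gridD d n with hG
  -- lower bound: any injective labeling has at least 2d sum values
  have hlb : ∀ g : V → ℤ, Function.Injective g →
      2 * d ≤ (edgePlus g '' G.edgeSet).ncard := by
    intro g hg
    obtain ⟨v, hv1⟩ : ∃ v : V, ∀ i, (v i : ℕ) = 1 :=
      ⟨fun i => ⟨1, by have := hn i; omega⟩, fun i => rfl⟩
    obtain ⟨w, hwv, hwj⟩ : ∃ w : Fin d × Bool → V,
        (∀ x, (w x x.1 : ℕ) = if x.2 then 2 else 0) ∧
        (∀ x (j : Fin d), j ≠ x.1 → w x j = v j) := by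
      refine ⟨fun x => Function.update v x.1
        ⟨if x.2 then 2 else 0, by have := hn x.1; split <;> omega⟩, fun x => ?_, fun x j hj => ?_⟩
      · simp
      · simp [Function.update_of_ne hj]
    have hadj : ∀ x : Fin d × Bool, G.Adj v (w x) := by
      intro x
      rw [hG, gridD, SimpleGraph.fromRel_adj]
      constructor
      · intro hcon
        have h := congrArg (fun z : V => (z x.1 : ℕ)) hcon
        rw [hv1 x.1, hwv x] at h
        split at h <;> omega
      · left
        rw [Fintype.sum_eq_single x.1]
        · rw [hv1 x.1, hwv x]
          push_cast
          split <;> norm_num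
        · intro j hj
          rw [hwj x j hj]
          simp
    have hwinj : Function.Injective w := by
      rintro ⟨i, b⟩ ⟨i', b'⟩ hxy
      have h1 : i = i' := by
        by_contra hne
        have h := congrArg (fun z : V => (z i : ℕ)) hxy
        have e1 := hwv (i, b)
        have e2 : (w (i', b') i : ℕ) = 1 := by
          rw [hwj (i', b') i (by simpa using hne), hv1]
        simp only at e1 e2
        rw [e1, e2] at h
        split at h <;> omega
      subst h1
      have h := congrArg (fun z : V => (z i : ℕ)) hxy
      have e1 := hwv (i, b)
      have e2 := hwv (i, b')
      simp only at e1 e2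
      rw [e1, e2] at h
      have : b = b' := by cases b <;> cases b' <;> simp_all
      rw [this]
    have hWinj : Function.Injective (fun x : Fin d × Bool => g v + g (w x)) := by
      intro x y hxy
      simp only [add_right_inj] at hxy
      exact hwinj (hg hxy)
    have hsub : Set.range (fun x : Fin d × Bool => g v + g (w x)) ⊆
        edgePlus g '' G.edgeSet := by
      rintro y ⟨x, rfl⟩
      exact ⟨s(v, w x), G.mem_edgeSet.mpr (hadj x), rfl⟩
    have hfin : (edgePlus g '' G.edgeSet).Finite := Set.toFinite _
    have hcard : (Set.range (fun x : Fin d × Bool => g v + g (w x))).ncard = 2 * d := by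
      rw [← Set.image_univ, Set.ncard_image_of_injective _ hWinj, Set.ncard_univ,
        Nat.card_eq_fintype_card, Fintype.card_prod, Fintype.card_fin, Fintype.card_bool]
      ring
    calc 2 * d = _ := hcard.symm
      _ ≤ _ := Set.ncard_le_ncard hsub hfin
  -- upper bound labeling
  have hub : (edgePlus (lab n) '' G.edgeSet).ncard ≤ 2 * d := by
    set S2 : Set ℤ := (fun i => Bz n i) '' Set.univ ∪ (fun i => -Bz n i) '' Set.univ with hS2
    have hsub : edgePlus (lab n) '' G.edgeSet ⊆ S2 := by
      rintro y ⟨e, he, rfl⟩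
      induction e with
      | _ p q =>
        rw [SimpleGraph.mem_edgeSet] at he
        obtain ⟨i, hcase⟩ := lab_edge_sum he
        have hval : edgePlus (lab n) s(p, q) = lab n p + lab n q := rfl
        rcases hcase with h' | h'
        · exact Or.inl ⟨i, Set.mem_univ i, by rw [hval, h']⟩
        · exact Or.inr ⟨i, Set.mem_univ i, by rw [hval, h']⟩
    have hfin : S2.Finite := (Set.finite_univ.image _).union (Set.finite_univ.image _)
    calc (edgePlus (lab n) '' G.edgeSet).ncard ≤ S2.ncard := Set.ncard_le_ncard hsub hfin
      _ ≤ ((fun i => Bz n i) '' Set.univ).ncard + ((fun i => -Bz n i) '' Set.univ).ncard :=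
          Set.ncard_union_le _ _
      _ ≤ d + d := by
          gcongr <;> calc _ ≤ (Set.univ : Set (Fin d)).ncard :=
              Set.ncard_image_le Set.finite_univ
            _ = d := by rw [Set.ncard_univ, Nat.card_eq_fintype_card, Fintype.card_fin]
      _ = 2 * d := by ring
  have hmem : (edgePlus (lab n) '' G.edgeSet).ncard ∈
      {k | ∃ f : V → ℤ, Function.Injective f ∧ (edgePlus f '' G.edgeSet).ncard = k} :=
    ⟨lab n, lab_inj, rfl⟩
  apply le_antisymm
  · exact (Nat.sInf_le hmem).trans hub
  · apply le_csInf ⟨_, hmem⟩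
    rintro k ⟨g, hg, rfl⟩
    exact hlb g hg
end

section
/- A nonempty simple graph G has sum index 1 if and only if every connected component of G with an edge is a single edge (a copy of K_2), and sum index at most 2 only if G is a disjoint union of paths. -/
open SimpleGraph Function

lemma walk_support_eq {V : Type*} {G : SimpleGraph V} {u v : V} (p : G.Walk u v) :
    p.support = (List.range (p.length + 1)).map p.getVert := by
  induction p with
  | nil => simp [SimpleGraph.Walk.support_nil]
  | cons h q ih =>
    rw [SimpleGraph.Walk.length_cons, List.range_succ_eq_map, List.map_cons,
      List.map_map, SimpleGraph.Walk.support_cons, ih]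
    congr 1

lemma cycle_getVert_inj {V : Type*} {G : SimpleGraph V} {v : V} {p : G.Walk v v}
    (hp : p.IsCycle) : ∀ i j, 1 ≤ i → i < j → j ≤ p.length →
      p.getVert i ≠ p.getVert j := by
  have hnd := hp.2
  rw [walk_support_eq] at hnd
  rw [List.range_succ_eq_map, List.map_cons, List.tail_cons, List.map_map] at hnd
  rw [List.Nodup, List.pairwise_iff_getElem] at hnd
  intro i j hi hij hj
  have h := hnd (i - 1) (j - 1) (by simp; omega) (by simp; omega) (by omega)
  simpa [Nat.succ_eq_add_one, show i - 1 + 1 = i by omega, show j - 1 + 1 = j by omega,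
    Function.comp] using h


lemma cycle_contra {V : Type*} {G : SimpleGraph V} {f : V → ℤ}
    (hf : Function.Injective f) (hcard : (edgePlus f '' G.edgeSet).ncard ≤ 2)
    (hfin : (edgePlus f '' G.edgeSet).Finite)
    {v : V} (p : G.Walk v v) (hp : p.IsCycle) : False := by
  set S := edgePlus f '' G.edgeSet with hSdef
  set n := p.length with hn
  have hn3 : 3 ≤ n := hp.three_le_length
  set g : ℕ → ℤ := fun i => f (p.getVert i) with hg
  set σ : ℕ → ℤ := fun i => g i + g (i + 1) with hσ
  have hg0 : g n = g 0 := by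
    simp [hg, SimpleGraph.Walk.getVert_length, SimpleGraph.Walk.getVert_zero, hn]
  have hinj : ∀ i j, 1 ≤ i → i < j → j ≤ n → g i ≠ g j := fun i j h1 h2 h3 hc =>
    cycle_getVert_inj hp i j h1 h2 h3 (hf hc)
  have hmem : ∀ i, i < n → σ i ∈ S := by
    intro i hi
    have hadj := p.adj_getVert_succ hi
    exact ⟨s(p.getVert i, p.getVert (i + 1)), hadj, rfl⟩
  -- two distinct values
  have hd : ∀ i, i + 2 ≤ n → g i ≠ g (i + 2) := by
    intro i h2 hc
    rcases Nat.eq_zero_or_pos i with h0 | h0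
    · subst h0
      exact hinj 2 n (by omega) (by omega) le_rfl (by rw [hg0, ← hc])
    · exact hinj i (i + 2) h0 (by omega) h2 hc
  have hAB : σ 0 ≠ σ 1 := by
    intro hc
    apply hd 0 (by omega)
    simp only [hσ, hg] at hc ⊢
    linarith
  -- S is exactly the two values
  have hS : ∀ x ∈ S, x = σ 0 ∨ x = σ 1 := by
    have hsub : {σ 0, σ 1} ⊆ S := by
      rintro x (rfl | rfl)
      · exact hmem 0 (by omega)
      · exact hmem 1 (by omega)
    have h2 : S.ncard ≤ ({σ 0, σ 1} : Set ℤ).ncard := by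
      rwa [Set.ncard_pair hAB]
    have := Set.eq_of_subset_of_ncard_le hsub h2 hfin
    rw [← this]
    rintro x (rfl | rfl) <;> simp
  -- alternation
  have halt : ∀ i, i < n → σ i = if Even i then σ 0 else σ 1 := by
    intro i
    induction i with
    | zero => simp
    | succ k ih =>
      intro hk
      have hk' : k < n := by omega
      have h1 := ih hk'
      have hdk : σ (k + 1) ≠ σ k := by
        intro hc
        apply hd k (by omega)
        simp only [hσ, hg] at hc ⊢
        linarith
      rcases hS _ (hmem (k + 1) hk) with h2 | h2 <;> rw [h2] <;>
        rcases Nat.even_or_odd k with hek | hek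
      · exfalso; apply hdk; rw [h2, h1, if_pos hek]
      · rw [if_pos (Nat.even_add_one.mpr (Nat.not_even_iff_odd.mpr hek))]
      · rw [if_neg (fun h => (Nat.even_add_one.mp h) hek)]
      · exfalso; apply hdk; rw [h2, h1, if_neg (Nat.not_even_iff_odd.mpr hek)]
  -- n is even
  have hpar : Even n := by
    by_contra hodd
    have h1 : σ (n - 1) = σ 0 := by
      rw [halt (n - 1) (by omega), if_pos]
      rcases Nat.even_or_odd n with h | h
      · exact absurd h hodd
      · rcases h with ⟨m, hm⟩; exact ⟨m, by omega⟩
    have h2 : g (n - 1 + 1) = g 0 := by rw [show n - 1 + 1 = n by omega, hg0]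
    apply hinj 1 (n - 1) le_rfl (by omega) (by omega)
    simp only [hσ] at h1
    rw [h2] at h1
    linarith
  -- arithmetic progression on even indices
  have hstep : ∀ k, 2 * k ≤ n → g (2 * k) = g 0 + (k : ℤ) * (σ 1 - σ 0) := by
    intro k
    induction k with
    | zero => simp
    | succ m ih =>
      intro hm
      have h1 := ih (by omega)
      have h2 : σ (2 * m) = σ 0 := by
        rw [halt (2 * m) (by omega), if_pos ⟨m, by ring⟩]
      have h3 : σ (2 * m + 1) = σ 1 := by
        rw [halt (2 * m + 1) (by omega), if_neg (by simp [Nat.even_add_one, parity_simps])]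
      have e1 : 2 * (m + 1) = 2 * m + 1 + 1 := by ring
      rw [e1]
      simp only [hσ] at h1 h2 h3 ⊢
      norm_num at h1 h2 h3 ⊢
      push_cast
      linear_combination h1 + h3 - h2
  rcases hpar with ⟨m, hm⟩
  have hmn : 2 * m = n := by omega
  have := hstep m (by omega)
  rw [hmn, hg0] at this
  have hm2 : (2 : ℤ) ≤ (m : ℤ) := by
    have : 2 ≤ m := by omega
    exact_mod_cast this
  have : (m : ℤ) * (σ 1 - σ 0) = 0 := by linarith
  rcases mul_eq_zero.1 this with h | h
  · omega
  · exact hAB (by linarith)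

theorem stmt9 {V : Type*} [Fintype V] [DecidableEq V] (G : SimpleGraph V)
    [DecidableRel G.Adj] (hG : G.edgeSet.Nonempty) :
    (sumIndex G = 1 ↔ ∀ v w u, G.Adj v w → G.Adj v u → w = u) ∧
    (sumIndex G ≤ 2 → G.IsAcyclic ∧ ∀ v, G.degree v ≤ 2) := by
  classical
  have hne : {k | ∃ f : V → ℤ, Function.Injective f ∧
      (edgePlus f '' G.edgeSet).ncard = k}.Nonempty := by
    refine ⟨_, fun v => ((Fintype.equivFin V v : ℕ) : ℤ), ?_, rfl⟩
    intro a b hab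
    exact (Fintype.equivFin V).injective (Fin.ext (Nat.cast_injective hab))
  have hmemInf : ∃ f : V → ℤ, Function.Injective f ∧
      (edgePlus f '' G.edgeSet).ncard = sumIndex G := Nat.sInf_mem hne
  have hfinS : ∀ f : V → ℤ, (edgePlus f '' G.edgeSet).Finite :=
    fun f => (Set.toFinite G.edgeSet).image _
  have hpos : 1 ≤ sumIndex G := by
    obtain ⟨f, hf, hc⟩ := hmemInf
    have := (Set.ncard_pos (hfinS f)).2 (hG.image (edgePlus f))
    omega
  constructor
  · constructor
    · -- forward: sumIndex = 1 → matching condition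
      intro h1 v w u hvw hvu
      obtain ⟨f, hf, hc⟩ := hmemInf
      rw [h1] at hc
      obtain ⟨c, hcs⟩ := Set.ncard_eq_one.mp hc
      have e1 : f v + f w = c := by
        have : edgePlus f s(v, w) ∈ ({c} : Set ℤ) := hcs ▸ ⟨_, hvw, rfl⟩
        simpa [edgePlus] using this
      have e2 : f v + f u = c := by
        have : edgePlus f s(v, u) ∈ ({c} : Set ℤ) := hcs ▸ ⟨_, hvu, rfl⟩
        simpa [edgePlus] using this
      exact hf (show f w = f u by linarith)
    · -- backward: matching condition → sumIndex = 1
      intro h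
      set N := Fintype.card V with hN
      let e : V → ℕ := fun x => (Fintype.equivFin V x : ℕ)
      have he : Function.Injective e := by
        intro a b hab
        apply (Fintype.equivFin V).injective
        exact Fin.ext hab
      have heN : ∀ x, e x < N := fun x => (Fintype.equivFin V x).isLt
      let f : V → ℤ := fun x =>
        if hx : ∃ w, G.Adj x w then
          (if e x < e hx.choose then ((e x : ℤ) + 1) else -((e hx.choose : ℤ) + 1))
        else ((e x : ℤ) + N + 1)
      have hfval : ∀ a, f a = if hx : ∃ w, G.Adj a w then
          (if e a < e hx.choose then ((e a : ℤ) + 1) else -((e hx.choose : ℤ) + 1))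
        else ((e a : ℤ) + N + 1) := fun a => rfl
      have hchoose : ∀ a b (hab : G.Adj a b) (hx : ∃ w, G.Adj a w), hx.choose = b :=
        fun a b hab hx => h a hx.choose b hx.choose_spec hab
      have hmatched : ∀ a b, G.Adj a b →
          f a = if e a < e b then ((e a : ℤ) + 1) else -((e b : ℤ) + 1) := by
        intro a b hab
        rw [hfval, dif_pos ⟨b, hab⟩, hchoose a b hab ⟨b, hab⟩]
      -- injectivity of f
      have hf : Function.Injective f := by
        intro x y hxy
        by_cases hx : ∃ w, G.Adj x w <;> by_cases hy : ∃ w, G.Adj y w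
        · rw [hfval x, dif_pos hx, hfval y, dif_pos hy] at hxy
          split_ifs at hxy with h1 h2 h2
          · have : e x = e y := by omega
            exact he this
          · exfalso; omega
          · exfalso; omega
          · have : e hx.choose = e hy.choose := by omega
            have hww : hx.choose = hy.choose := he this
            exact h hx.choose x y hx.choose_spec.symm (hww ▸ hy.choose_spec.symm)
        · rw [hfval x, dif_pos hx, hfval y, dif_neg hy] at hxy
          exfalso
          have := heN x
          split_ifs at hxy <;> omega
        · rw [hfval x, dif_neg hx, hfval y, dif_pos hy] at hxy
          exfalso
          have := heN y
          split_ifs at hxy <;> omega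
        · rw [hfval x, dif_neg hx, hfval y, dif_neg hy] at hxy
          have : e x = e y := by omega
          exact he this
      -- all edge sums are zero
      have himg : edgePlus f '' G.edgeSet = {0} := by
        apply Set.eq_singleton_iff_nonempty_unique_mem.mpr
        refine ⟨hG.image _, ?_⟩
        rintro x ⟨ed, hed, rfl⟩
        induction ed with
        | h a b =>
          have hab : G.Adj a b := hed
          have hne' : e a ≠ e b := fun hc => (G.ne_of_adj hab) (he hc)
          have ha := hmatched a b hab
          have hb := hmatched b a hab.symm
          show edgePlus f s(a, b) = 0
          have : edgePlus f s(a, b) = f a + f b := by simp [edgePlus]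
          rw [this]
          rcases Nat.lt_or_ge (e a) (e b) with hlt | hge
          · rw [ha, hb, if_pos hlt, if_neg (by omega)]; ring
          · have hlt' : e b < e a := by omega
            rw [ha, hb, if_neg (by omega), if_pos hlt']; ring
      have hle : sumIndex G ≤ 1 :=
        Nat.sInf_le ⟨f, hf, by rw [himg]; exact Set.ncard_singleton 0⟩
      omega
  · -- sumIndex ≤ 2 → acyclic ∧ degrees ≤ 2
    intro h2
    obtain ⟨f, hf, hc⟩ := hmemInf
    have hcard : (edgePlus f '' G.edgeSet).ncard ≤ 2 := by rw [hc]; exact h2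
    constructor
    · intro v p hp
      exact cycle_contra hf hcard (hfinS f) p hp
    · intro v
      by_contra hdeg
      push_neg at hdeg
      have h3 : 3 ≤ (G.neighborFinset v).card := hdeg
      set t := (G.neighborFinset v).image (fun w => f v + f w) with ht
      have hcardt : t.card = (G.neighborFinset v).card := by
        apply Finset.card_image_of_injOn
        intro a _ b _ hab
        exact hf (by dsimp at hab; linarith)
      have hsub : t ⊆ (hfinS f).toFinset := by
        intro x hx
        rw [Finset.mem_image] at hx
        obtain ⟨w, hw, rfl⟩ := hx
        rw [Set.Finite.mem_toFinset]
        exact ⟨s(v, w), (G.mem_neighborFinset v w).1 hw, rfl⟩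
      have := Finset.card_le_card hsub
      rw [Set.ncard_eq_toFinset_card _ (hfinS f)] at hcard
      omega
end

section
/- For every positive integer r, the number of points x = (x_1,…,x_k) ∈ ℤ^k with ‖x‖₁ = r and x_1 + ⋯ + x_k = (1 + (−1)^{r+1})/2 (i.e., 1 if r is odd and 0 if r is even) equals ∑_{j=1}^{k} C(k,j)·C(⌈r/2⌉ + j − 1, j − 1)·C(⌊r/2⌋ − 1, k − j − 1), with the conventions C(−1, t) = 0 for t ≥ 0 and C(−1, −1) = 1. -/
/-- Binomial coefficient with integer arguments, with the conventions
`C(−1, −1) = 1`, `C(−1, t) = 0` for `t ≥ 0`, and `C(a, −1) = 0` for `a ≥ 0`. -/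
def extChoose (a b : ℤ) : ℕ :=
  if a = -1 ∧ b = -1 then 1
  else if 0 ≤ a ∧ 0 ≤ b then a.toNat.choose b.toNat
  else 0

open Finset

section Aux

def symEquivSum (t m : ℕ) : {f : Fin t → ℕ // ∑ i, f i = m} ≃ Sym (Fin t) m where
  toFun f := ⟨∑ i, (f.1 i) • ({i} : Multiset (Fin t)), by
    rw [Multiset.card_sum]; simpa [Multiset.card_nsmul] using f.2⟩
  invFun s := ⟨fun i => s.1.count i, by
    have h2 := s.2
    conv_rhs => rw [← h2, ← Multiset.toFinset_sum_count_eq s.1]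
    exact (Finset.sum_subset (Finset.subset_univ _) (by
      intro x _ hx
      simpa [Multiset.count_eq_zero] using fun h => hx (Multiset.mem_toFinset.2 h))).symm⟩
  left_inv f := by
    ext i
    simp [Multiset.count_sum', Multiset.count_singleton]
  right_inv s := by
    ext : 1
    show ∑ i, (s.1.count i) • ({i} : Multiset (Fin t)) = s.1
    conv_rhs => rw [← Multiset.toFinset_sum_count_nsmul_eq s.1]
    exact (Finset.sum_subset (Finset.subset_univ _) (by
      intro x _ hx
      have h : s.1.count x = 0 := by
        simpa [Multiset.count_eq_zero] using fun h => hx (Multiset.mem_toFinset.2 h)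
      rw [h, zero_nsmul])).symm

lemma natCard_sum_eq (t m : ℕ) :
    Nat.card {f : Fin t → ℕ // ∑ i, f i = m} = Nat.multichoose t m := by
  rw [Nat.card_congr (symEquivSum t m), Nat.card_eq_fintype_card,
    Sym.card_sym_eq_multichoose, Fintype.card_fin]

lemma natCard_possum (t m : ℕ) :
    Nat.card {v : Fin t → ℕ // ∑ i, (v i + 1) = m} = extChoose ((m : ℤ) - 1) ((t : ℤ) - 1) := by
  have hsum : ∀ v : Fin t → ℕ, ∑ i, (v i + 1) = (∑ i, v i) + t := by
    intro v; rw [Finset.sum_add_distrib]; simp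
  rcases le_or_gt t m with htm | htm
  · have e : {v : Fin t → ℕ // ∑ i, (v i + 1) = m} ≃ {v : Fin t → ℕ // ∑ i, v i = m - t} :=
      Equiv.subtypeEquivRight (by intro v; rw [hsum v]; omega)
    rw [Nat.card_congr e, natCard_sum_eq, Nat.multichoose_eq]
    rcases Nat.eq_zero_or_pos m with hm | hm
    · have ht : t = 0 := by omega
      subst hm; subst ht
      simp [extChoose]
    rcases Nat.eq_zero_or_pos t with ht | ht
    · subst ht
      rw [extChoose, if_neg (by omega), if_neg (by omega)]
      exact Nat.choose_eq_zero_of_lt (by omega)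
    · rw [extChoose, if_neg (by omega), if_pos (by omega)]
      have h1 : ((m : ℤ) - 1).toNat = m - 1 := by omega
      have h2 : ((t : ℤ) - 1).toNat = t - 1 := by omega
      rw [h1, h2]
      have h3 : t + (m - t) - 1 = m - 1 := by omega
      have h4 : (m - 1) - (t - 1) = m - t := by omega
      rw [h3, ← h4, Nat.choose_symm (by omega)]
  · have he : IsEmpty {v : Fin t → ℕ // ∑ i, (v i + 1) = m} := by
      constructor
      rintro ⟨v, hv⟩
      rw [hsum v] at hv
      omega
    rw [Nat.card_of_isEmpty]
    rcases Nat.eq_zero_or_pos m with hm | hm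
    · subst hm
      rw [extChoose, if_neg (by omega), if_neg (by omega)]
    · rw [extChoose, if_neg (by omega), if_pos (by omega)]
      have h1 : ((m : ℤ) - 1).toNat = m - 1 := by omega
      have h2 : ((t : ℤ) - 1).toNat = t - 1 := by omega
      rw [h1, h2, Nat.choose_eq_zero_of_lt (by omega)]

def sumCondCongr {α β : Type*} [Fintype α] [Fintype β] (e : α ≃ β) (g : ℕ → ℕ) (m : ℕ) :
    {u : α → ℕ // ∑ i, g (u i) = m} ≃ {u : β → ℕ // ∑ i, g (u i) = m} where
  toFun u := ⟨u.1 ∘ e.symm, (Equiv.sum_comp e.symm fun j => g (u.1 j)).trans u.2⟩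
  invFun u := ⟨u.1 ∘ e, (Equiv.sum_comp e fun j => g (u.1 j)).trans u.2⟩
  left_inv u := by ext i; simp
  right_inv u := by ext i; simp

def splitEquiv {k : ℕ} (T : Finset (Fin k)) (A B : ℕ) :
    {y : Fin k → ℕ // (∑ i ∈ Tᶜ, y i = A) ∧ (∑ i ∈ T, (y i + 1) = B)} ≃
      {u : ↥(Tᶜ) → ℕ // ∑ i, u i = A} × {v : ↥T → ℕ // ∑ i, (v i + 1) = B} where
  toFun y := (⟨fun i => y.1 i.1, by
      rw [univ_eq_attach]; exact (Finset.sum_attach Tᶜ y.1).trans y.2.1⟩,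
    ⟨fun i => y.1 i.1, by
      rw [univ_eq_attach]; exact (Finset.sum_attach T (fun i => y.1 i + 1)).trans y.2.2⟩)
  invFun p := ⟨fun i => if h : i ∈ T then p.2.1 ⟨i, h⟩ else p.1.1 ⟨i, Finset.mem_compl.2 h⟩, by
    constructor
    · rw [← Finset.sum_attach Tᶜ]
      rw [Finset.sum_congr rfl (fun (i : {x // x ∈ Tᶜ}) _ =>
        dif_neg (Finset.mem_compl.1 i.2))]
      rw [← univ_eq_attach]; exact p.1.2
    · rw [← Finset.sum_attach T (fun i => _ + 1)]
      rw [Finset.sum_congr rfl (fun (i : {x // x ∈ T}) _ =>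
        show (if h : i.1 ∈ T then p.2.1 ⟨i.1, h⟩ else p.1.1 ⟨i.1, Finset.mem_compl.2 h⟩) + 1
            = p.2.1 i + 1 by rw [dif_pos i.2])]
      rw [← univ_eq_attach]; exact p.2.2⟩
  left_inv y := by
    ext i
    by_cases h : i ∈ T <;> simp [h]
  right_inv p := by
    ext i
    · simp [dif_neg (Finset.mem_compl.1 i.2)]
    · simp [dif_pos i.2]

lemma split_vals {k : ℕ} (T : Finset (Fin k)) (A B : ℕ) (x : Fin k → ℤ)
    (h1 : ∑ i, |x i| = (A : ℤ) + B) (h2 : ∑ i, x i = (A : ℤ) - B)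
    (h3 : ∀ i, x i < 0 ↔ i ∈ T) :
    (∑ i ∈ Tᶜ, x i = A) ∧ (∑ i ∈ T, -(x i) = B) := by
  have habs : ∑ i ∈ Tᶜ, x i + ∑ i ∈ T, -(x i) = (A : ℤ) + B := by
    rw [← h1, ← Finset.sum_compl_add_sum T fun i => |x i|]
    congr 1
    · exact Finset.sum_congr rfl fun i hi =>
        (abs_of_nonneg (le_of_not_gt fun h => (Finset.mem_compl.1 hi) ((h3 i).1 h))).symm
    · exact Finset.sum_congr rfl fun i hi => (abs_of_neg ((h3 i).2 hi)).symm
  have hsum : ∑ i ∈ Tᶜ, x i - ∑ i ∈ T, -(x i) = (A : ℤ) - B := by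
    rw [← h2, ← Finset.sum_compl_add_sum T x, Finset.sum_neg_distrib]
    ring
  constructor <;> omega

def signEquiv {k : ℕ} (T : Finset (Fin k)) (A B : ℕ) :
    {x : Fin k → ℤ // (∑ i, |x i| = (A : ℤ) + B) ∧ (∑ i, x i = (A : ℤ) - B) ∧
        ∀ i, (x i < 0 ↔ i ∈ T)} ≃
    {y : Fin k → ℕ // (∑ i ∈ Tᶜ, y i = A) ∧ (∑ i ∈ T, (y i + 1) = B)} where
  toFun x := ⟨fun i => if i ∈ T then (-(x.1 i) - 1).toNat else (x.1 i).toNat, by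
    obtain ⟨hP, hN⟩ := split_vals T A B x.1 x.2.1 x.2.2.1 x.2.2.2
    constructor
    · apply Nat.cast_inj (R := ℤ) |>.mp
      push_cast
      refine Eq.trans (Finset.sum_congr rfl fun i hi => ?_) hP
      simp only [if_neg (Finset.mem_compl.1 hi)]
      exact Int.toNat_of_nonneg
        (le_of_not_gt fun h => (Finset.mem_compl.1 hi) ((x.2.2.2 i).1 h))
    · apply Nat.cast_inj (R := ℤ) |>.mp
      push_cast
      refine Eq.trans (Finset.sum_congr rfl fun i hi => ?_) hN
      simp only [if_pos hi]
      have hneg : x.1 i < 0 := (x.2.2.2 i).2 hi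
      rw [Int.toNat_of_nonneg (by omega)]
      ring⟩
  invFun y := ⟨fun i => if i ∈ T then -((y.1 i : ℤ) + 1) else (y.1 i : ℤ), by
    obtain ⟨hP, hN⟩ := y.2
    have hPz : ∑ i ∈ Tᶜ, (y.1 i : ℤ) = A := by exact_mod_cast congrArg (Nat.cast : ℕ → ℤ) hP
    have hNz : ∑ i ∈ T, ((y.1 i : ℤ) + 1) = B := by exact_mod_cast congrArg (Nat.cast : ℕ → ℤ) hN
    refine ⟨?_, ?_, ?_⟩
    · rw [← Finset.sum_compl_add_sum T, ← hPz, ← hNz]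
      congr 1
      · exact Finset.sum_congr rfl fun i hi => by
          simp only [if_neg (Finset.mem_compl.1 hi)]
          exact abs_of_nonneg (by positivity)
      · exact Finset.sum_congr rfl fun i hi => by
          simp only [if_pos hi]
          rw [abs_of_neg (by omega)]; ring
    · rw [← Finset.sum_compl_add_sum T]
      have e1 : ∑ i ∈ T, (if i ∈ T then -((y.1 i : ℤ) + 1) else (y.1 i : ℤ)) = -(B : ℤ) := by
        rw [← hNz, ← Finset.sum_neg_distrib]
        exact Finset.sum_congr rfl fun i hi => by simp only [if_pos hi]
      have e2 : ∑ i ∈ Tᶜ, (if i ∈ T then -((y.1 i : ℤ) + 1) else (y.1 i : ℤ))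
          = ∑ i ∈ Tᶜ, (y.1 i : ℤ) :=
        Finset.sum_congr rfl fun i hi => by simp only [if_neg (Finset.mem_compl.1 hi)]
      rw [e1, e2, hPz]
      ring
    · intro i
      by_cases h : i ∈ T
      · simpa [h] using (show -((y.1 i : ℤ) + 1) < 0 by omega)
      · simpa [h] using (show ¬ ((y.1 i : ℤ) < 0) by omega)⟩
  left_inv x := by
    ext i
    by_cases h : i ∈ T <;> simp only [h, if_true, if_false]
    · have hneg : x.1 i < 0 := (x.2.2.2 i).2 h
      rw [Int.toNat_of_nonneg (by omega)]; ring
    · exact Int.toNat_of_nonneg (le_of_not_gt fun hh => h ((x.2.2.2 i).1 hh))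
  right_inv y := by
    ext i
    by_cases h : i ∈ T <;> simp only [h, if_true, if_false]
    · omega
    · exact Int.toNat_natCast _

lemma natCard_fiber {k : ℕ} (T : Finset (Fin k)) (A B : ℕ) :
    Nat.card {x : Fin k → ℤ // (∑ i, |x i| = (A : ℤ) + B) ∧ (∑ i, x i = (A : ℤ) - B) ∧
        ∀ i, (x i < 0 ↔ i ∈ T)} =
      Nat.multichoose (k - T.card) A * extChoose ((B : ℤ) - 1) ((T.card : ℤ) - 1) := by
  rw [Nat.card_congr ((signEquiv T A B).trans (splitEquiv T A B)), Nat.card_prod]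
  congr 1
  · have e1 : ↥(Tᶜ) ≃ Fin (k - T.card) :=
      Fintype.equivFinOfCardEq (by rw [Fintype.card_coe, Finset.card_compl, Fintype.card_fin])
    rw [Nat.card_congr (sumCondCongr e1 (fun n => n) A), natCard_sum_eq]
  · have e2 : ↥T ≃ Fin T.card := Fintype.equivFinOfCardEq (by rw [Fintype.card_coe])
    rw [Nat.card_congr (sumCondCongr e2 (fun n => n + 1) B), natCard_possum]

end Aux

theorem stmt12 (k r : ℕ) (hr : 0 < r) :
    Set.ncard {x : Fin k → ℤ |
        (∑ i, |x i|) = (r : ℤ) ∧ (∑ i, x i) = (1 + (-1 : ℤ) ^ (r + 1)) / 2} =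
      ∑ j ∈ Finset.Icc 1 k,
        k.choose j * (((r + 1) / 2 + j - 1).choose (j - 1)) *
          extChoose ((r / 2 : ℕ) - 1 : ℤ) ((k : ℤ) - (j : ℤ) - 1) := by
  classical
  set A := (r + 1) / 2 with hA
  set B := r / 2 with hB
  have hAB : A + B = r := by omega
  have hA1 : 1 ≤ A := by omega
  have hs : (1 + (-1 : ℤ) ^ (r + 1)) / 2 = (A : ℤ) - B := by
    rcases Nat.even_or_odd r with ⟨m, hm⟩ | ⟨m, hm⟩
    · subst hm
      have h1 : (-1 : ℤ) ^ (m + m + 1) = -1 := Odd.neg_one_pow ⟨m, by ring⟩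
      rw [h1]
      have hA' : A = m := by omega
      have hB' : B = m := by omega
      rw [hA', hB']
      norm_num
    · subst hm
      have h1 : (-1 : ℤ) ^ (2 * m + 1 + 1) = 1 := Even.neg_one_pow ⟨m + 1, by ring⟩
      rw [h1]
      have hA' : A = m + 1 := by omega
      have hB' : B = m := by omega
      rw [hA', hB']
      push_cast
      omega
  have hr' : (r : ℤ) = (A : ℤ) + B := by exact_mod_cast congrArg (Nat.cast : ℕ → ℤ) hAB.symm
  -- the set as a finset
  set F : Finset (Fin k → ℤ) :=
    (Fintype.piFinset fun _ : Fin k => Finset.Icc (-((A : ℤ) + B)) ((A : ℤ) + B)).filter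
      (fun x => (∑ i, |x i| = (A : ℤ) + B) ∧ (∑ i, x i = (A : ℤ) - B)) with hF
  have hbound : ∀ x : Fin k → ℤ, (∑ i, |x i| = (A : ℤ) + B) → ∀ i,
      x i ∈ Finset.Icc (-((A : ℤ) + B)) ((A : ℤ) + B) := by
    intro x hx i
    have h1 : |x i| ≤ (A : ℤ) + B := by
      rw [← hx]
      exact Finset.single_le_sum (f := fun i => |x i|) (fun j _ => abs_nonneg _)
        (Finset.mem_univ i)
    rw [Finset.mem_Icc]
    constructor <;> [skip; skip] <;> cases abs_le.1 h1 <;> omega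
  have hset : {x : Fin k → ℤ |
      (∑ i, |x i|) = (r : ℤ) ∧ (∑ i, x i) = (1 + (-1 : ℤ) ^ (r + 1)) / 2} = ↑F := by
    ext x
    simp only [Set.mem_setOf_eq, hF, Finset.coe_filter, Fintype.mem_piFinset, hr', hs]
    exact ⟨fun h => ⟨fun i => hbound x h.1 i, h⟩, fun h => h.2⟩
  rw [hset, Set.ncard_coe_finset]
  rw [Finset.card_eq_sum_card_fiberwise
    (f := fun x => Finset.univ.filter fun i => x i < 0) (t := Finset.univ.powerset)
    (fun x _ => Finset.mem_powerset.2 (Finset.subset_univ _))]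
  have hfib : ∀ T : Finset (Fin k),
      (F.filter fun x => (Finset.univ.filter fun i => x i < 0) = T).card =
        Nat.multichoose (k - T.card) A * extChoose ((B : ℤ) - 1) ((T.card : ℤ) - 1) := by
    intro T
    rw [← natCard_fiber T A B, ← Fintype.card_coe, ← Nat.card_eq_fintype_card]
    apply Nat.card_congr
    apply Equiv.subtypeEquivRight
    intro x
    simp only [Finset.mem_filter, Fintype.mem_piFinset, hF]
    constructor
    · rintro ⟨⟨_, h1, h2⟩, h3⟩
      refine ⟨h1, h2, fun i => ?_⟩
      rw [← h3]
      simp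
    · rintro ⟨h1, h2, h3⟩
      refine ⟨⟨fun i => hbound x h1 i, h1, h2⟩, ?_⟩
      ext i
      simp [h3 i]
  rw [Finset.sum_congr rfl fun T _ => hfib T]
  rw [Finset.sum_powerset_apply_card
    (fun t => Nat.multichoose (k - t) A * extChoose ((B : ℤ) - 1) ((t : ℤ) - 1))]
  rw [Finset.card_univ, Fintype.card_fin]
  rw [← Finset.sum_range_reflect]
  have hsub : Finset.Icc 1 k ⊆ Finset.range (k + 1) := by
    intro j hj
    simp only [Finset.mem_Icc] at hj
    exact Finset.mem_range.2 (by omega)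
  refine (Finset.sum_subset hsub ?_).symm.trans (Finset.sum_congr rfl ?_)
  · intro j hj hj'
    have hj0 : j = 0 := by
      simp only [Finset.mem_range] at hj
      simp only [Finset.mem_Icc] at hj'
      omega
    subst hj0
    have : Nat.multichoose (k - (k + 1 - 1 - 0)) A = 0 := by
      have hk : k - (k + 1 - 1 - 0) = 0 := by omega
      rw [hk, Nat.multichoose_eq]
      exact Nat.choose_eq_zero_of_lt (by omega)
    rw [this]
    ring
  · intro j hj
    simp only [Finset.mem_Icc] at hj
    have h1 : k + 1 - 1 - j = k - j := by omega
    have h2 : k - (k - j) = j := by omega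
    rw [h1, h2, Nat.choose_symm hj.2, smul_eq_mul]
    have h3 : Nat.multichoose j A = (A + j - 1).choose (j - 1) := by
      rw [Nat.multichoose_eq]
      have h4 : j + A - 1 = A + j - 1 := by omega
      have h5 : A + j - 1 - (j - 1) = A := by omega
      have h7 := Nat.choose_symm (show j - 1 ≤ A + j - 1 by omega)
      rw [h5] at h7
      rw [h4]
      exact h7
    rw [h3]
    have h6 : ((k - j : ℕ) : ℤ) - 1 = (k : ℤ) - (j : ℤ) - 1 := by
      have : (j : ℤ) ≤ k := by exact_mod_cast hj.2
      omega
    rw [h6, mul_assoc]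
end

section
/- For every nonempty finite simple graph G, the difference index satisfies d(G) ≥ max{⌈χ'(G)/2⌉, δ(G)}, where χ'(G) is the chromatic index and δ(G) is the minimum degree. -/
open SimpleGraph Function

/-- A proper edge coloring with `n` colors: distinct edges sharing a vertex get
distinct colors. -/
def IsProperEdgeColoring {V : Type*} (G : SimpleGraph V) (n : ℕ) (C : Sym2 V → Fin n) : Prop :=
  ∀ e₁ ∈ G.edgeSet, ∀ e₂ ∈ G.edgeSet, e₁ ≠ e₂ → (∃ v, v ∈ e₁ ∧ v ∈ e₂) → C e₁ ≠ C e₂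

/-- The chromatic index: minimum number of colors in a proper edge coloring. -/
noncomputable def chromaticIndex {V : Type*} (G : SimpleGraph V) : ℕ :=
  sInf {n | ∃ C : Sym2 V → Fin n, IsProperEdgeColoring G n C}

lemma flip_lemma (m d : ℤ) (hd : 0 < d) :
    (m % (2*d) < d) ↔ ¬ ((m + d) % (2*d) < d) := by
  have h2d : (0:ℤ) < 2*d := by omega
  have hr0 : 0 ≤ m % (2*d) := Int.emod_nonneg m (by omega)
  have hr1 : m % (2*d) < 2*d := Int.emod_lt_of_pos m h2d
  have hdm : d % (2*d) = d := Int.emod_eq_of_lt (by omega) (by omega)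
  have hadd : (m + d) % (2*d) = (m % (2*d) + d) % (2*d) := by
    conv_lhs => rw [Int.add_emod, hdm]
  set r := m % (2*d) with hr
  by_cases h : r < d
  · have : (r + d) % (2*d) = r + d := Int.emod_eq_of_lt (by omega) (by omega)
    rw [hadd, this]
    omega
  · have : (r + d) % (2*d) = r - d := by
      have : r + d = (r - d) + (2*d) * 1 := by ring
      rw [this, Int.add_mul_emod_self_left]
      exact Int.emod_eq_of_lt (by omega) (by omega)
    rw [hadd, this]
    omega

theorem stmt14 {V : Type*} [Fintype V] (G : SimpleGraph V) [DecidableRel G.Adj]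
    (hG : G.edgeSet.Nonempty) :
    max ((chromaticIndex G + 1) / 2) G.minDegree ≤ diffIndex G := by
  classical
  have hne : {k | ∃ f : V → ℤ, Function.Injective f ∧ (edgeMinus f '' G.edgeSet).ncard = k}.Nonempty := by
    refine ⟨_, fun v => ((Fintype.equivFin V v : ℕ) : ℤ), ?_, rfl⟩
    intro a b h
    exact (Fintype.equivFin V).injective (Fin.val_injective (Int.natCast_inj.mp h))
  obtain ⟨f, hf, hk⟩ := Nat.sInf_mem hne
  have hk' : (edgeMinus f '' G.edgeSet).ncard = diffIndex G := hk
  set k := diffIndex G with hkdef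
  set S := edgeMinus f '' G.edgeSet with hS
  have hfin : S.Finite := (Set.toFinite G.edgeSet).image _
  have hSne : S.Nonempty := hG.image _
  have hkcard : hfin.toFinset.card = k := by
    rw [← hk', Set.ncard_eq_toFinset_card S hfin]
  have hVne : Nonempty V := by
    obtain ⟨e, he⟩ := hG
    induction e using Sym2.ind with
    | _ u v => exact ⟨u⟩
  have hk1 : 1 ≤ k := by
    rw [← hkcard]
    exact Finset.card_pos.mpr (hfin.toFinset_nonempty.mpr hSne)
  refine max_le ?_ ?_
  · -- chromatic index bound
    have hcardS : Fintype.card {x // x ∈ hfin.toFinset} = k := by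
      rw [Fintype.card_coe, hkcard]
    let ιe := Fintype.equivFinOfCardEq hcardS
    let ι : ℤ → Fin k := fun d => if h : d ∈ hfin.toFinset then ιe ⟨d, h⟩ else ⟨0, hk1⟩
    have hι : ∀ d₁ ∈ S, ∀ d₂ ∈ S, ι d₁ = ι d₂ → d₁ = d₂ := by
      intro d₁ h₁ d₂ h₂ h
      have h₁' : d₁ ∈ hfin.toFinset := by simpa using h₁
      have h₂' : d₂ ∈ hfin.toFinset := by simpa using h₂
      simp only [ι, dif_pos h₁', dif_pos h₂'] at h
      exact congrArg Subtype.val (ιe.injective h)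
    let b : Sym2 V → Bool := Sym2.lift ⟨fun u v =>
      decide (min (f u) (f v) % (2 * |f u - f v|) < |f u - f v|),
      fun u v => by dsimp only; rw [min_comm (f u) (f v), abs_sub_comm (f u) (f v)]⟩
    let C : Sym2 V → Fin (2 * k) := fun e =>
      ⟨2 * (ι (edgeMinus f e)).val + (if b e then 1 else 0), by
        have := (ι (edgeMinus f e)).isLt; split <;> omega⟩
    have hproper : IsProperEdgeColoring G (2 * k) C := by
      intro e₁ he₁ e₂ he₂ hnee ⟨v, hv₁, hv₂⟩ hC
      obtain ⟨u, rfl⟩ := Sym2.mem_iff_exists.mp hv₁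
      obtain ⟨w, rfl⟩ := Sym2.mem_iff_exists.mp hv₂
      have hS₁ : edgeMinus f s(v, u) ∈ S := ⟨_, he₁, rfl⟩
      have hS₂ : edgeMinus f s(v, w) ∈ S := ⟨_, he₂, rfl⟩
      have hCval : 2 * (ι (edgeMinus f s(v,u))).val + (if b s(v,u) then 1 else 0)
          = 2 * (ι (edgeMinus f s(v,w))).val + (if b s(v,w) then 1 else 0) :=
        congrArg Fin.val hC
      have hbeq : b s(v,u) = b s(v,w) := by
        rcases Bool.eq_false_or_eq_true (b s(v,u)) with h1 | h1 <;>
        rcases Bool.eq_false_or_eq_true (b s(v,w)) with h2 | h2 <;>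
          simp [h1, h2] at hCval ⊢ <;> omega
      have hιeq : ι (edgeMinus f s(v,u)) = ι (edgeMinus f s(v,w)) := by
        rcases Bool.eq_false_or_eq_true (b s(v,u)) with h1 | h1 <;>
        rcases Bool.eq_false_or_eq_true (b s(v,w)) with h2 | h2 <;>
          simp [h1, h2] at hCval <;> exact Fin.val_injective (by omega)
      have hdeq : |f v - f u| = |f v - f w| := hι _ hS₁ _ hS₂ hιeq
      have huv : G.Adj v u := (SimpleGraph.mem_edgeSet G).mp he₁
      have hwv : G.Adj v w := (SimpleGraph.mem_edgeSet G).mp he₂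
      have huw : u ≠ w := fun h => hnee (by rw [h])
      have hfuw : f u ≠ f w := fun h => huw (hf h)
      set d := |f v - f u| with hdd
      have hdpos : 0 < d := by
        have : f v ≠ f u := fun h => huv.ne (hf h)
        simp [hdd, abs_pos, sub_ne_zero.mpr this]
      have hcases : (f u = f v - d ∧ f w = f v + d) ∨ (f u = f v + d ∧ f w = f v - d) := by
        rcases abs_cases (f v - f u) with ⟨h1, -⟩ | ⟨h1, -⟩ <;>
        rcases abs_cases (f v - f w) with ⟨h2, -⟩ | ⟨h2, -⟩ <;>
          rw [← hdeq] at h2 <;> omega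
      have hb₁ : b s(v,u) = decide (min (f v) (f u) % (2 * d) < d) := rfl
      have hb₂ : b s(v,w) = decide (min (f v) (f w) % (2 * d) < d) := by
        show decide (min (f v) (f w) % (2 * |f v - f w|) < |f v - f w|) = _
        rw [← hdeq]
      rw [hb₁, hb₂, decide_eq_decide] at hbeq
      have hflip := flip_lemma (f v - d) d hdpos
      have hfv : f v - d + d = f v := by ring
      rw [hfv] at hflip
      rcases hcases with ⟨hu', hw'⟩ | ⟨hu', hw'⟩
      · have hmu : min (f v) (f u) = f v - d := by rw [hu']; omega
        have hmw : min (f v) (f w) = f v := by rw [hw']; omega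
        rw [hmu, hmw] at hbeq
        tauto
      · have hmu : min (f v) (f u) = f v := by rw [hu']; omega
        have hmw : min (f v) (f w) = f v - d := by rw [hw']; omega
        rw [hmu, hmw] at hbeq
        tauto
    have hchi : chromaticIndex G ≤ 2 * k := Nat.sInf_le ⟨C, hproper⟩
    omega
  · -- min degree bound
    obtain ⟨v, -, hv⟩ := Finset.exists_max_image Finset.univ f ⟨Classical.arbitrary V, Finset.mem_univ _⟩
    have hdeg : G.degree v ≤ hfin.toFinset.card := by
      apply Finset.card_le_card_of_injOn (fun u => f v - f u)
      · intro u hu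
        have hadj : G.Adj v u := by simpa using hu
        have hle : f u ≤ f v := hv u (Finset.mem_univ u)
        have hne' : f u ≠ f v := fun h => hadj.ne' (hf h)
        have heq : edgeMinus f s(v, u) = f v - f u := by
          show |f v - f u| = f v - f u
          rw [abs_of_pos (by omega)]
        rw [Finset.mem_coe, Set.Finite.mem_toFinset]
        exact ⟨s(v,u), hadj, heq⟩
      · intro a _ c _ h
        simp only at h
        exact hf (by omega)
    calc G.minDegree ≤ G.degree v := G.minDegree_le_degree v
      _ ≤ hfin.toFinset.card := hdeg
      _ = k := hkcard
end
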